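/- arXiv:1601.07136 — 6 statements merged into one kernel-verified Lean document; each statement's English description precedes it below -/
import Mathlib

section
/- Let (A, m∩A) be a quasi-local subring of a complete local (Noetherian) ring (T, m) such that the natural map A → T/m² is surjective and aT ∩ A = a for every finitely generated ideal a of A. Then A is Noetherian and the natural homomorphism from the m∩A-adic completion of A to T is an isomorphism. -/
open IsLocalRing

/-- If the span of a set is finitely generated, some finite subset has the same span. -/
lemma exists_finite_subset_span_eq {R M : Type*} [Semiring R] [AddCommMonoid M] [Module R M]
    {S : Set M} (h : (Submodule.span R S).FG) :
    ∃ s : Set M, s.Finite ∧ s ⊆ S ∧ Submodule.span R s = Submodule.span R S := by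
  obtain ⟨t, ht⟩ := h
  have key : ∀ x : M, ∃ u : Set M, u.Finite ∧ u ⊆ S ∧
      (x ∈ Submodule.span R S → x ∈ Submodule.span R u) := by
    intro x
    by_cases hx : x ∈ Submodule.span R S
    · obtain ⟨u, hu1, hu2⟩ := Submodule.mem_span_finite_of_mem_span hx
      exact ⟨u, u.finite_toSet, hu1, fun _ => hu2⟩
    · exact ⟨∅, Set.finite_empty, Set.empty_subset _, fun h => absurd h hx⟩
  choose u hu1 hu2 hu3 using key
  refine ⟨⋃ x ∈ (t : Set M), u x, ?_, ?_, le_antisymm ?_ ?_⟩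
  · exact t.finite_toSet.biUnion fun x _ => hu1 x
  · exact Set.iUnion₂_subset fun x _ => hu2 x
  · exact Submodule.span_mono (Set.iUnion₂_subset fun x _ => hu2 x)
  · rw [← ht, Submodule.span_le]
    intro x hx
    exact Submodule.span_mono (Set.subset_iUnion₂ x hx)
      (hu3 x (ht ▸ Submodule.subset_span hx))

set_option maxHeartbeats 1000000 in
/-- Auxiliary: if `A → T/mⁿ` is surjective for all `n` with kernel `Jⁿ`, and `T` is
`m`-adically complete, then the `J`-adic completion of `A` is isomorphic to `T`. -/
lemma completion_equiv_aux {T : Type*} [CommRing T] (m : Ideal T) [IsAdicComplete m T]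
    (A : Subring T) (J : Ideal A)
    (hsurj : ∀ n : ℕ, ∀ t : T, ∃ a : A, t - (a : T) ∈ m ^ n)
    (hker : ∀ n : ℕ, Ideal.comap A.subtype (m ^ n) = J ^ n) :
    ∃ e : AdicCompletion J A ≃+* T,
      ∀ a : A, e (algebraMap A (AdicCompletion J A) a) = (a : T) := by
  classical
  have hJn : ∀ n : ℕ, ((J ^ n • ⊤ : Ideal A) : Submodule A A) = (J ^ n : Ideal A) := by
    intro n; ext x; simp
  have hJm : ∀ (n : ℕ) (c : A), c ∈ (J ^ n • ⊤ : Ideal A) → ((c : A) : T) ∈ m ^ n := by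
    intro n c hc
    rw [hJn n, ← hker n] at hc
    exact hc
  have hsmulT : ∀ n : ℕ, ((m ^ n • ⊤ : Ideal T) : Submodule T T) = (m ^ n : Ideal T) := by
    intro n; ext x; simp
  -- mk-lifts of values of an adic completion element are well-defined mod mⁿ
  have hlift : ∀ (n : ℕ) (x : AdicCompletion J A) (a b : A),
      x.val n = Ideal.Quotient.mk (J ^ n • ⊤ : Ideal A) a →
      x.val n = Ideal.Quotient.mk (J ^ n • ⊤ : Ideal A) b →
      (b : T) - (a : T) ∈ m ^ n := by
    intro n x a b hxa hxb
    have h1 : (b : A) - a ∈ (J ^ n • ⊤ : Ideal A) := Ideal.Quotient.eq.mp (hxb.symm.trans hxa)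
    have := hJm n _ h1
    push_cast at this
    exact this
  -- the defining predicate of the limit map
  set P : AdicCompletion J A → T → Prop := fun x L =>
    ∀ (n : ℕ) (a : A), x.val n = Ideal.Quotient.mk (J ^ n • ⊤ : Ideal A) a →
      L - (a : T) ∈ m ^ n with hP
  have huniq : ∀ x L L', P x L → P x L' → L = L' := by
    intro x L L' hL hL'
    have : ∀ n : ℕ, L - L' ∈ m ^ n := by
      intro n
      obtain ⟨a, ha⟩ := Ideal.Quotient.mk_surjective (x.val n)
      have h1 := hL n a ha.symm
      have h2 := hL' n a ha.symm
      have := (m ^ n).sub_mem h1 h2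
      convert this using 1; ring
    have : L - L' = 0 := by
      refine IsHausdorff.haus (inferInstance : IsHausdorff m T) (L - L') (fun n => ?_)
      rw [SModEq.zero, hsmulT n]
      exact this n
    exact sub_eq_zero.mp this
  have hex : ∀ x : AdicCompletion J A, ∃ L, P x L := by
    intro x
    have hchoice : ∀ n : ℕ, ∃ a : A, x.val n = Ideal.Quotient.mk (J ^ n • ⊤ : Ideal A) a :=
      fun n => (Ideal.Quotient.mk_surjective (x.val n)).imp (fun a ha => ha.symm)
    choose a haspec using hchoice
    have hcauchy : ∀ {k n : ℕ}, k ≤ n →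
        ((a k : T) : T) ≡ (a n : T) [SMOD (m ^ k • ⊤ : Submodule T T)] := by
      intro k n hkn
      have h1 : AdicCompletion.transitionMap J A hkn (x.val n) = x.val k := x.property hkn
      rw [haspec n, AdicCompletion.transitionMap_ideal_mk] at h1
      have h4 := hlift k x (a n) (a k) h1.symm (haspec k)
      rw [SModEq.sub_mem, hsmulT k]
      exact h4
    obtain ⟨L, hL⟩ := IsPrecomplete.prec (inferInstance : IsPrecomplete m T)
      (f := fun n => (a n : T)) (fun {k n} hkn => hcauchy hkn)
    refine ⟨L, ?_⟩
    intro n b hb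
    have hLa : L - (a n : T) ∈ m ^ n := by
      have := hL n
      rw [SModEq.sub_mem, hsmulT n] at this
      have := (m ^ n).neg_mem this
      convert this using 1; ring
    have hab := hlift n x (a n) b (haspec n) hb
    have := (m ^ n).sub_mem hLa hab
    convert this using 1; ring
  choose h hh using hex
  -- h is a ring homomorphism
  have h_one : h 1 = 1 := by
    refine huniq 1 (h 1) 1 (hh 1) ?_
    intro n a ha
    have : (1 : AdicCompletion J A).val n = Ideal.Quotient.mk (J ^ n • ⊤ : Ideal A) 1 := rfl
    have h1 := hlift n 1 a 1 ha this
    simpa using h1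
  have h_mul : ∀ x y, h (x * y) = h x * h y := by
    intro x y
    refine huniq (x * y) (h (x * y)) (h x * h y) (hh _) ?_
    intro n c hc
    obtain ⟨a, ha⟩ := Ideal.Quotient.mk_surjective (x.val n)
    obtain ⟨b, hb⟩ := Ideal.Quotient.mk_surjective (y.val n)
    have hab : (x * y).val n = Ideal.Quotient.mk (J ^ n • ⊤ : Ideal A) (a * b) := by
      rw [AdicCompletion.val_mul, ← ha, ← hb]
      exact ((Ideal.Quotient.mk (J ^ n • ⊤ : Ideal A)).map_mul a b).symm
    have hcab := hlift n (x * y) c (a * b) hc hab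
    have hxa := hh x n a ha.symm
    have hyb := hh y n b hb.symm
    -- h x * h y - c = (h x - a) * h y + a * (h y - b) + (a * b - c)
    have h1 : (h x - (a : T)) * h y ∈ m ^ n := Ideal.mul_mem_right _ _ hxa
    have h2 : (a : T) * (h y - (b : T)) ∈ m ^ n := Ideal.mul_mem_left _ _ hyb
    have h3 := (m ^ n).add_mem ((m ^ n).add_mem h1 h2) hcab
    convert h3 using 1; push_cast; ring
  have h_add : ∀ x y, h (x + y) = h x + h y := by
    intro x y
    refine huniq (x + y) (h (x + y)) (h x + h y) (hh _) ?_
    intro n c hc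
    obtain ⟨a, ha⟩ := Ideal.Quotient.mk_surjective (x.val n)
    obtain ⟨b, hb⟩ := Ideal.Quotient.mk_surjective (y.val n)
    have hab : (x + y).val n = Ideal.Quotient.mk (J ^ n • ⊤ : Ideal A) (a + b) := by
      rw [AdicCompletion.val_add_apply, ← ha, ← hb]
      exact ((Ideal.Quotient.mk (J ^ n • ⊤ : Ideal A)).map_add a b).symm
    have hcab := hlift n (x + y) c (a + b) hc hab
    have hxa := hh x n a ha.symm
    have hyb := hh y n b hb.symm
    have h3 := (m ^ n).add_mem ((m ^ n).add_mem hxa hyb) hcab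
    convert h3 using 1; push_cast; ring
  -- h is bijective
  have h_inj : ∀ x y, h x = h y → x = y := by
    intro x y hxy
    refine AdicCompletion.ext (fun n => ?_)
    obtain ⟨a, ha⟩ := Ideal.Quotient.mk_surjective (x.val n)
    obtain ⟨b, hb⟩ := Ideal.Quotient.mk_surjective (y.val n)
    have hxa := hh x n a ha.symm
    have hyb := hh y n b hb.symm
    rw [hxy] at hxa
    have hba : (a : T) - (b : T) ∈ m ^ n := by
      have := (m ^ n).sub_mem hyb hxa
      convert this using 1; ring
    have : (a - b : A) ∈ (J ^ n : Ideal A) := by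
      rw [← hker n]
      have : ((a - b : A) : T) ∈ m ^ n := by push_cast; exact hba
      exact this
    rw [← ha, ← hb]
    refine Ideal.Quotient.eq.mpr ?_
    rw [hJn n]
    exact this
  have h_surj : ∀ t : T, ∃ x, h x = t := by
    intro t
    have hcompat : ∀ {k n : ℕ} (hkn : k ≤ n),
        AdicCompletion.transitionMap J A hkn
          (Ideal.Quotient.mk (J ^ n • ⊤ : Ideal A) (Classical.choose (hsurj n t)))
        = Ideal.Quotient.mk (J ^ k • ⊤ : Ideal A) (Classical.choose (hsurj k t)) := by
      intro k n hkn
      rw [AdicCompletion.transitionMap_ideal_mk]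
      refine Ideal.Quotient.eq.mpr ?_
      rw [hJn k, ← hker k]
      have h1 := Classical.choose_spec (hsurj n t)
      have h2 := Classical.choose_spec (hsurj k t)
      have h1' : t - ((Classical.choose (hsurj n t) : A) : T) ∈ m ^ k :=
        Ideal.pow_le_pow_right hkn h1
      have hmem : ((Classical.choose (hsurj n t) - Classical.choose (hsurj k t) : A) : T)
          ∈ m ^ k := by
        push_cast
        have := (m ^ k).sub_mem h2 h1'
        convert this using 1; ring
      exact hmem
    set x : AdicCompletion J A :=
      ⟨fun n => Ideal.Quotient.mk (J ^ n • ⊤ : Ideal A) (Classical.choose (hsurj n t)),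
        fun {k n} hkn => hcompat hkn⟩ with hx
    refine ⟨x, huniq x (h x) t (hh x) ?_⟩
    intro n a ha
    have hxa : x.val n = Ideal.Quotient.mk (J ^ n • ⊤ : Ideal A) (Classical.choose (hsurj n t)) :=
      rfl
    have hd := hlift n x (Classical.choose (hsurj n t)) a hxa ha
    have hs := Classical.choose_spec (hsurj n t)
    have := (m ^ n).sub_mem hs hd
    convert this using 1; ring
  -- assemble the ring equivalence
  let e : AdicCompletion J A ≃+* T :=
    { toFun := h
      invFun := fun t => Classical.choose (h_surj t)
      left_inv := fun x => h_inj _ _ (Classical.choose_spec (h_surj (h x)))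
      right_inv := fun t => Classical.choose_spec (h_surj t)
      map_mul' := h_mul
      map_add' := h_add }
  refine ⟨e, fun a => ?_⟩
  show h (algebraMap A (AdicCompletion J A) a) = (a : T)
  refine huniq _ _ _ (hh _) ?_
  intro n b hb
  have hval : (algebraMap A (AdicCompletion J A) a).val n =
      Ideal.Quotient.mk (J ^ n • ⊤ : Ideal A) a := rfl
  have := hlift n _ b a hb hval
  exact this

set_option maxHeartbeats 2000000 in
/-- **Heitmann, Proposition 1.** If `(A, m ∩ A)` is a quasi-local subring of a complete
local (Noetherian) ring `(T, m)` (i.e. the units of `A` are exactly the elements of `A`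
lying outside `m`), the natural map `A → T/m²` is onto, and `aT ∩ A = a` for every
finitely generated ideal `a` of `A`, then `A` is Noetherian and the natural homomorphism
from the `(m ∩ A)`-adic completion of `A` to `T` is an isomorphism. -/
theorem noetherian_and_completion_eq {T : Type*} [CommRing T] [IsLocalRing T]
    [IsNoetherianRing T] [IsAdicComplete (maximalIdeal T) T]
    (A : Subring T)
    (hql : ∀ x : A, IsUnit x ↔ (x : T) ∉ maximalIdeal T)
    (honto : Function.Surjective
      (fun a : A => Ideal.Quotient.mk ((maximalIdeal T) ^ 2) (a : T)))
    (hclosed : ∀ a : Ideal A, a.FG → Ideal.comap A.subtype (Ideal.map A.subtype a) = a) :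
    IsNoetherianRing A ∧
    ∃ e : AdicCompletion (Ideal.comap A.subtype (maximalIdeal T)) A ≃+* T,
      ∀ a : A,
        e (algebraMap A (AdicCompletion (Ideal.comap A.subtype (maximalIdeal T)) A) a)
          = (a : T) := by
  classical
  set m : Ideal T := maximalIdeal T with hm
  set J : Ideal A := Ideal.comap A.subtype m with hJdef
  -- basic approximation mod m²
  have approx2 : ∀ t : T, ∃ a : A, t - (a : T) ∈ m ^ 2 := by
    intro t
    obtain ⟨a, ha⟩ := honto (Ideal.Quotient.mk (m ^ 2) t)
    refine ⟨a, ?_⟩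
    have := Ideal.Quotient.eq.mp ha
    simpa using (m ^ 2).neg_mem this
  have approx1 : ∀ t : T, ∃ a : A, t - (a : T) ∈ m := by
    intro t
    obtain ⟨a, ha⟩ := approx2 t
    exact ⟨a, Ideal.pow_le_self two_ne_zero ha⟩
  -- A is Noetherian
  have noeth : IsNoetherianRing A := by
    rw [isNoetherianRing_iff_ideal_fg]
    intro I
    have hfg : (Ideal.map A.subtype I).FG := IsNoetherian.noetherian _
    have hmapI : Ideal.map A.subtype I =
        Ideal.span ((A.subtype : A → T) '' (I : Set A)) := rfl
    rw [hmapI] at hfg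
    obtain ⟨s, hsfin, hsub, hspan⟩ := exists_finite_subset_span_eq hfg
    -- pull back s to A
    set u : Set A := (A.subtype : A → T) ⁻¹' s with hu
    have hinj : Function.Injective (A.subtype : A → T) := Subtype.val_injective
    have hufin : u.Finite := Set.Finite.preimage hinj.injOn hsfin
    have huI : u ⊆ (I : Set A) := by
      intro a ha
      obtain ⟨b, hbI, hb⟩ := hsub ha
      rwa [← hinj hb]
    have himg : (A.subtype : A → T) '' u = s := by
      apply Set.image_preimage_eq_of_subset
      refine hsub.trans ?_
      exact Set.image_subset_range _ _
    have hfgu : (Ideal.span u).FG := ⟨hufin.toFinset, by simp⟩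
    have hmapu : Ideal.map A.subtype (Ideal.span u) = Ideal.map A.subtype I := by
      rw [Ideal.map_span, himg, hmapI]; exact hspan
    have hIle : I ≤ Ideal.span u := by
      intro x hx
      have : x ∈ Ideal.comap A.subtype (Ideal.map A.subtype I) :=
        Ideal.le_comap_map hx
      rw [← hmapu, hclosed _ hfgu] at this
      exact this
    have : I = Ideal.span u := le_antisymm hIle (Ideal.span_le.mpr huI)
    exact this ▸ hfgu
  haveI := noeth
  -- m = J T
  have hmapJ1 : Ideal.map A.subtype J = m := by
    refine le_antisymm Ideal.map_comap_le ?_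
    have hNN : (m : Submodule T T) ≤ (Ideal.map A.subtype J : Submodule T T) ⊔ m • m := by
      intro x hx
      obtain ⟨a, ha⟩ := approx2 x
      have haJ : a ∈ J := by
        have hmem : (a : T) ∈ m := by
          have h2 : x - (a : T) ∈ m := Ideal.pow_le_self two_ne_zero ha
          have := m.sub_mem hx h2
          simpa using this
        exact hmem
      refine Submodule.mem_sup.mpr ⟨(a : T), Ideal.mem_map_of_mem _ haJ, x - a, ?_, by ring⟩
      have : m • m = m ^ 2 := by rw [smul_eq_mul, sq]
      rw [this]; exact ha
    exact Submodule.le_of_le_smul_of_le_jacobson_bot (IsNoetherian.noetherian m)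
      (maximalIdeal_le_jacobson ⊥) hNN
  have hmapJ : ∀ n : ℕ, Ideal.map A.subtype (J ^ n) = m ^ n := by
    intro n; rw [Ideal.map_pow, hmapJ1]
  -- kernels
  have hker : ∀ n : ℕ, Ideal.comap A.subtype (m ^ n) = J ^ n := by
    intro n
    rw [← hmapJ n, hclosed _ (IsNoetherian.noetherian _)]
  -- one-step approximation
  have hstep : ∀ n : ℕ, ∀ t ∈ m ^ n, ∃ a : A, (a : T) ∈ m ^ n ∧ t - (a : T) ∈ m ^ (n + 1) := by
    intro n
    match n with
    | 0 =>
      intro t _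
      obtain ⟨a, ha⟩ := approx1 t
      exact ⟨a, by simp, by simpa using ha⟩
    | (n + 1) =>
      intro t ht
      rw [← hmapJ (n + 1)] at ht
      have ht' : t ∈ Submodule.span T ((A.subtype : A → T) '' ((J ^ (n + 1) : Ideal A) : Set A)) := ht
      refine Submodule.span_induction ?_ ?_ ?_ ?_ ht'
      · rintro x ⟨a, haJ, rfl⟩
        refine ⟨a, ?_, by simp⟩
        rw [← hmapJ (n + 1)]
        exact Ideal.mem_map_of_mem _ haJ
      · exact ⟨0, by simp, by simp⟩
      · rintro x y _ _ ⟨a, ha1, ha2⟩ ⟨b, hb1, hb2⟩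
        refine ⟨a + b, ?_, ?_⟩
        · push_cast; exact Ideal.add_mem _ ha1 hb1
        · push_cast
          have := Ideal.add_mem _ ha2 hb2
          convert this using 1; ring
      · rintro c x _ ⟨a, ha1, ha2⟩
        obtain ⟨b, hb⟩ := approx1 c
        refine ⟨b * a, ?_, ?_⟩
        · push_cast
          exact Ideal.mul_mem_left _ _ ha1
        · have h1 : c * (x - (a : T)) ∈ m ^ (n + 2) := Ideal.mul_mem_left _ _ ha2
          have h2 : (a : T) * (c - (b : T)) ∈ m ^ (n + 2) := by
            have : (a : T) * (c - (b : T)) ∈ m ^ (n + 1) * m := Ideal.mul_mem_mul ha1 hb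
            rwa [← pow_succ] at this
          have := Ideal.add_mem _ h1 h2
          have heq : c • x - ((b * a : A) : T) = c * (x - (a : T)) + (a : T) * (c - (b : T)) := by
            simp only [smul_eq_mul]; push_cast; ring
          rw [heq]
          exact this
  -- surjectivity of A → T/mⁿ
  have hsurj : ∀ n : ℕ, ∀ t : T, ∃ a : A, t - (a : T) ∈ m ^ n := by
    intro n
    induction n with
    | zero => intro t; exact ⟨0, by simp⟩
    | succ n ih =>
      intro t
      obtain ⟨a, ha⟩ := ih t
      obtain ⟨b, _, hb⟩ := hstep n _ ha
      refine ⟨a + b, ?_⟩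
      have : t - (a : T) - (b : T) ∈ m ^ (n + 1) := hb
      convert this using 1
      push_cast; ring
  obtain ⟨e, he⟩ := completion_equiv_aux m A J hsurj hker
  exact ⟨noeth, e, he⟩
end

section
/- Let (T, m) be a complete local (Noetherian) ring of Krull dimension at least one, and let p be a nonmaximal prime ideal of T. Then the cardinality of T/p equals the cardinality of T, and this cardinality is at least 2^{ℵ₀}. -/
open IsLocalRing Cardinal


universe u
variable {T : Type u} [CommRing T] [IsLocalRing T]

/-- A finite module killed by the maximal ideal admits a surjection from a finite power
of the residue field. -/
lemma aux_surj_of_smul_top_eq_bot (M : Type u) [AddCommGroup M] [Module T M]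
    [Module.Finite T M] (h : maximalIdeal T • (⊤ : Submodule T M) = ⊥) :
    ∃ (d : ℕ) (g : (Fin d → ResidueField T) → M), Function.Surjective g := by
  obtain ⟨d, g, hg⟩ := Module.Finite.exists_fin' T M
  have key : ∀ y : T, y ∈ maximalIdeal T → ∀ w : M, y • w = 0 := by
    intro y hy w
    have : y • w ∈ maximalIdeal T • (⊤ : Submodule T M) := Submodule.smul_mem_smul hy trivial
    rw [h] at this
    simpa using this
  set sec : ResidueField T → T := Function.surjInv residue_surjective with hsec
  refine ⟨d, fun a => g fun i => sec (a i), fun z => ?_⟩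
  obtain ⟨v, hv⟩ := hg z
  refine ⟨fun i => residue T (v i), ?_⟩
  have hmem : ∀ i, v i - sec (residue T (v i)) ∈ maximalIdeal T := by
    intro i
    have : residue T (v i - sec (residue T (v i))) = 0 := by
      rw [map_sub, hsec, Function.surjInv_eq residue_surjective, sub_self]
    exact (Ideal.Quotient.eq_zero_iff_mem).mp this
  have hzero : g (v - fun i => sec (residue T (v i))) = 0 := by
    set w : Fin d → T := v - fun i => sec (residue T (v i)) with hw
    have hwdecomp : w = ∑ i : Fin d, Pi.single i (w i) := by
      simp [Finset.univ_sum_single]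
    rw [hwdecomp, map_sum]
    refine Finset.sum_eq_zero fun i _ => ?_
    have hsingle : Pi.single i (w i) = w i • (Pi.single i (1 : T) : Fin d → T) := by
      funext j
      by_cases hj : j = i <;> simp [hj, Pi.single_apply]
    rw [hsingle, map_smul, key (w i) (hmem i)]
  have h2 : g v - g (fun i => sec (residue T (v i))) = 0 := by
    rw [← map_sub, ← hzero]
  show g (fun i => sec (residue T (v i))) = z
  rw [← hv]
  exact (sub_eq_zero.mp h2).symm

lemma aux_card_le_of_pow_smul [IsNoetherianRing T] :
    ∀ (n : ℕ) (M : Type u) [AddCommGroup M] [Module T M] [_h : Module.Finite T M],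
      ((maximalIdeal T) ^ n • (⊤ : Submodule T M) = ⊥) →
      Cardinal.mk M ≤ max (#(ResidueField T)) ℵ₀ := by
  intro n
  induction n with
  | zero =>
    intro M _ _ _ h
    rw [pow_zero, Ideal.one_eq_top, Submodule.top_smul] at h
    have hsub : Subsingleton M := by
      constructor
      intro a b
      have ha : a ∈ (⊥ : Submodule T M) := h ▸ Submodule.mem_top
      have hb : b ∈ (⊥ : Submodule T M) := h ▸ Submodule.mem_top
      rw [Submodule.mem_bot] at ha hb
      rw [ha, hb]
    exact le_trans (Cardinal.le_one_iff_subsingleton.mpr hsub)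
      (le_trans Cardinal.one_le_aleph0 (le_max_right _ _))
  | succ n ih =>
    intro M _ _ _ h
    have hcinf : ℵ₀ ≤ max (#(ResidueField T)) ℵ₀ := le_max_right _ _
    set N : Submodule T M := maximalIdeal T • ⊤ with hN
    have hNoeth : IsNoetherian T M := isNoetherian_of_isNoetherianRing_of_finite T M
    have hNfin : Module.Finite T N := Module.Finite.iff_fg.mpr (IsNoetherian.noetherian N)
    have hQfin : Module.Finite T (M ⧸ N) :=
      Module.Finite.of_surjective N.mkQ (Submodule.mkQ_surjective N)
    -- the quotient is killed by m
    have hq : maximalIdeal T • (⊤ : Submodule T (M ⧸ N)) = ⊥ := by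
      rw [eq_bot_iff]
      refine Submodule.smul_le.mpr ?_
      rintro r hr x -
      obtain ⟨y, rfl⟩ := Submodule.Quotient.mk_surjective N x
      rw [Submodule.mem_bot, ← Submodule.Quotient.mk_smul, Submodule.Quotient.mk_eq_zero]
      exact Submodule.smul_mem_smul hr trivial
    -- N is killed by m^n
    have hN2 : (maximalIdeal T) ^ n • (⊤ : Submodule T N) = ⊥ := by
      rw [eq_bot_iff]
      refine Submodule.smul_le.mpr ?_
      rintro r hr z -
      have hz : (z : M) ∈ maximalIdeal T • (⊤ : Submodule T M) := z.2
      have hmem : r • (z : M) ∈ (maximalIdeal T ^ n) • (maximalIdeal T • (⊤ : Submodule T M)) :=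
        Submodule.smul_mem_smul hr hz
      rw [← Submodule.smul_assoc, smul_eq_mul, ← pow_succ, h, Submodule.mem_bot] at hmem
      rw [Submodule.mem_bot]
      exact Subtype.ext (by simpa using hmem)
    obtain ⟨d, gq, hgq⟩ := aux_surj_of_smul_top_eq_bot (T := T) (M ⧸ N) hq
    have h1 : #(M ⧸ N) ≤ max (#(ResidueField T)) ℵ₀ := by
      refine le_trans (Cardinal.mk_le_of_surjective hgq) ?_
      have harrow : #(Fin d → ResidueField T) = #(ResidueField T) ^ (d : ℕ) := by
        simp [Cardinal.mk_arrow]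
      rw [harrow]
      refine le_trans (pow_le_pow_left₀ zero_le (le_max_left _ ℵ₀) d) ?_
      exact Cardinal.power_nat_le hcinf
    have h2 : #(↥N) ≤ max (#(ResidueField T)) ℵ₀ := ih N hN2
    have hprod : #M ≤ #(M ⧸ N) * #(↥N) := by
      have e : M ≃ (M ⧸ N) × ↥N :=
        AddSubgroup.addGroupEquivQuotientProdAddSubgroup (s := N.toAddSubgroup)
      simpa using (Cardinal.mk_congr e).le
    refine le_trans hprod ?_
    refine le_trans (mul_le_mul' h1 h2) ?_
    exact (Cardinal.mul_eq_self hcinf).le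

lemma aux_card_T_le [IsNoetherianRing T] [IsAdicComplete (maximalIdeal T) T] :
    Cardinal.mk T ≤ (max (#(ResidueField T)) ℵ₀) ^ (ℵ₀ : Cardinal.{u}) := by
  have hsm : ∀ n : ℕ, (maximalIdeal T) ^ n • (⊤ : Submodule T T) = (maximalIdeal T) ^ n := by
    intro n
    simp [Ideal.smul_top_eq_map]
  have hinj : Function.Injective
      (fun (x : T) (n : ℕ) => (Ideal.Quotient.mk ((maximalIdeal T) ^ n) x)) := by
    intro x y hxy
    have hsub : x - y = 0 := by
      refine IsHausdorff.haus (I := maximalIdeal T) inferInstance (x - y) fun n => ?_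
      rw [SModEq.sub_mem, sub_zero, hsm n]
      exact (Ideal.Quotient.mk_eq_mk_iff_sub_mem x y).mp (congrFun hxy n)
    exact sub_eq_zero.mp hsub
  have hbound : ∀ n : ℕ, #(T ⧸ ((maximalIdeal T) ^ n : Ideal T)) ≤ max (#(ResidueField T)) ℵ₀ := by
    intro n
    have hfin : Module.Finite T (T ⧸ ((maximalIdeal T) ^ n : Ideal T)) :=
      Module.Finite.of_surjective ((maximalIdeal T) ^ n : Ideal T).mkQ
        (Submodule.mkQ_surjective _)
    refine aux_card_le_of_pow_smul n _ ?_
    rw [eq_bot_iff]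
    refine Submodule.smul_le.mpr ?_
    rintro r hr x -
    obtain ⟨z, rfl⟩ := Submodule.Quotient.mk_surjective _ x
    rw [Submodule.mem_bot, ← Submodule.Quotient.mk_smul, Submodule.Quotient.mk_eq_zero]
    exact Ideal.mul_mem_right z _ hr
  calc #T ≤ #(Π n : ℕ, T ⧸ ((maximalIdeal T) ^ n : Ideal T)) := Cardinal.mk_le_of_injective hinj
    _ = Cardinal.prod (fun n : ℕ => #(T ⧸ ((maximalIdeal T) ^ n : Ideal T))) := Cardinal.mk_pi _
    _ ≤ Cardinal.prod (fun _ : ℕ => max (#(ResidueField T)) ℵ₀) :=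
        Cardinal.prod_le_prod _ _ hbound
    _ ≤ (max (#(ResidueField T)) ℵ₀) ^ (ℵ₀ : Cardinal.{u}) := by
        simp [Cardinal.prod_const]

lemma aux_limit [IsAdicComplete (maximalIdeal T) T] (c : ℕ → T) {t : T}
    (ht : t ∈ maximalIdeal T) :
    ∃ L : T, ∀ N : ℕ, L - (∑ i ∈ Finset.range N, c i * t ^ i) ∈ (maximalIdeal T) ^ N := by
  have hsm : ∀ n : ℕ, (maximalIdeal T) ^ n • (⊤ : Submodule T T) = (maximalIdeal T) ^ n := by
    intro n
    simp [Ideal.smul_top_eq_map]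
  have hcauchy : ∀ {m n : ℕ}, m ≤ n →
      (∑ i ∈ Finset.range m, c i * t ^ i) ≡ (∑ i ∈ Finset.range n, c i * t ^ i)
        [SMOD (maximalIdeal T) ^ m • (⊤ : Submodule T T)] := by
    intro m n hmn
    rw [SModEq.sub_mem, hsm]
    rw [← neg_sub, ← Finset.sum_Ico_eq_sub _ hmn]
    refine neg_mem (Submodule.sum_mem _ fun i hi => ?_)
    have hti : t ^ i ∈ (maximalIdeal T) ^ m := by
      refine Ideal.pow_le_pow_right (Finset.mem_Ico.mp hi).1 ?_
      exact Ideal.pow_mem_pow ht i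
    exact Ideal.mul_mem_left _ _ hti
  obtain ⟨L, hL⟩ := IsPrecomplete.prec (IsAdicComplete.toIsPrecomplete) hcauchy
  refine ⟨L, fun N => ?_⟩
  have := (SModEq.sub_mem).mp (hL N)
  rw [hsm] at this
  simpa using neg_mem this

lemma aux_sum_factor (d : ℕ → T) (t : T) (n N : ℕ) (hn : n + 1 ≤ N)
    (h0 : ∀ i < n, d i = 0) :
    ∑ i ∈ Finset.range N, d i * t ^ i
      = t ^ n * (d n + t * ∑ j ∈ Finset.range (N - n - 1), d (n + 1 + j) * t ^ j) := by
  have h1 : ∑ i ∈ Finset.range N, d i * t ^ i = ∑ i ∈ Finset.Ico n N, d i * t ^ i := by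
    rw [Finset.range_eq_Ico, ← Finset.sum_Ico_consecutive _ (Nat.zero_le n) (by omega : n ≤ N)]
    have : ∑ i ∈ Finset.Ico 0 n, d i * t ^ i = 0 := by
      refine Finset.sum_eq_zero fun i hi => ?_
      rw [h0 i (Finset.mem_Ico.mp hi).2, zero_mul]
    rw [this, zero_add]
  rw [h1, Finset.sum_Ico_eq_sum_range]
  have h2 : ∀ j : ℕ, d (n + j) * t ^ (n + j) = t ^ n * (d (n + j) * t ^ j) := by
    intro j
    rw [pow_add]
    ring
  rw [Finset.sum_congr rfl fun j _ => h2 j, ← Finset.mul_sum]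
  congr 1
  have h3 : N - n = (N - n - 1) + 1 := by omega
  rw [h3, Finset.sum_range_succ']
  simp only [pow_zero, mul_one, add_zero]
  rw [add_comm]
  congr 1
  rw [Finset.mul_sum]
  refine Finset.sum_congr rfl fun j _ => ?_
  rw [show n + (j + 1) = n + 1 + j by omega, pow_succ]
  ring

lemma aux_key [IsNoetherianRing T] [IsAdicComplete (maximalIdeal T) T]
    (p : Ideal T) (hp : p.IsPrime) (hpmax : ¬ p.IsMaximal) :
    #(ℕ → ResidueField T) ≤ #(T ⧸ p) := by
  haveI := hp
  haveI : Nontrivial (T ⧸ p) := Ideal.Quotient.nontrivial_iff.mpr hp.ne_top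
  haveI : IsLocalRing (T ⧸ p) :=
    IsLocalRing.of_surjective' (Ideal.Quotient.mk p) Ideal.Quotient.mk_surjective
  set π : T →+* T ⧸ p := Ideal.Quotient.mk p with hπ
  -- an element of the maximal ideal not in p
  have hplt : p < maximalIdeal T :=
    lt_of_le_of_ne (le_maximalIdeal hp.ne_top)
      (fun h => hpmax (h ▸ maximalIdeal.isMaximal T))
  obtain ⟨t, htm, htp⟩ := SetLike.exists_of_lt hplt
  -- the image of the maximal ideal is contained in the maximal ideal of the quotient
  have hmap : ∀ y ∈ maximalIdeal T, π y ∈ maximalIdeal (T ⧸ p) := by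
    intro y hy
    rw [mem_maximalIdeal, mem_nonunits_iff]
    intro hu
    obtain ⟨b, hb⟩ := isUnit_iff_exists_inv.mp hu
    obtain ⟨z, rfl⟩ := Ideal.Quotient.mk_surjective b
    have h1 : y * z - 1 ∈ p := by
      rw [← Ideal.Quotient.eq_zero_iff_mem]
      rw [map_sub, map_mul, map_one]
      show π y * π z - 1 = 0
      rw [hb, sub_self]
    have h2 : y * z - 1 ∈ maximalIdeal T := le_maximalIdeal hp.ne_top h1
    have h3 : y * z ∈ maximalIdeal T := Ideal.mul_mem_right z _ hy
    have h4 : (1 : T) ∈ maximalIdeal T := by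
      have := sub_mem h3 h2
      simpa using this
    exact (Ideal.ne_top_iff_one _).mp (maximalIdeal.isMaximal T).ne_top h4
  have hMle : (maximalIdeal T).map π ≤ maximalIdeal (T ⧸ p) :=
    Ideal.map_le_iff_le_comap.mpr (fun y hy => hmap y hy)
  set sec : ResidueField T → T := Function.surjInv residue_surjective with hsec
  have hsecres : ∀ c, residue T (sec c) = c := fun c => Function.surjInv_eq residue_surjective c
  -- the limit function
  have hlim : ∀ a : ℕ → T, ∃ L : T,
      ∀ N : ℕ, L - (∑ i ∈ Finset.range N, a i * t ^ i) ∈ (maximalIdeal T) ^ N :=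
    fun a => aux_limit a htm
  set Lim : (ℕ → T) → T := fun a => Classical.choose (hlim a) with hLim
  have hLspec : ∀ (a : ℕ → T) (N : ℕ),
      Lim a - (∑ i ∈ Finset.range N, a i * t ^ i) ∈ (maximalIdeal T) ^ N :=
    fun a => Classical.choose_spec (hlim a)
  -- the injection
  have hinj : Function.Injective (fun a : ℕ → ResidueField T => π (Lim (fun i => sec (a i)))) := by
    intro a b hab
    classical
    by_contra hne
    obtain hex := Function.ne_iff.mp hne
    set n := Nat.find hex with hn
    set d : ℕ → T := fun i => sec (a i) - sec (b i) with hd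
    have hd0 : ∀ i < n, d i = 0 := by
      intro i hi
      have : a i = b i := not_ne_iff.mp (Nat.find_min hex hi)
      simp [hd, this]
    have hdu : IsUnit (d n) := by
      have hres : residue T (d n) ≠ 0 := by
        rw [hd]
        simp only [map_sub, hsecres]
        exact sub_ne_zero.mpr (Nat.find_spec hex)
      by_contra hnu
      exact hres (Ideal.Quotient.eq_zero_iff_mem.mpr
        ((mem_maximalIdeal _).mpr (mem_nonunits_iff.mpr hnu)))
    set La := Lim (fun i => sec (a i)) with hLa
    set Lb := Lim (fun i => sec (b i)) with hLb
    have hLab : La - Lb ∈ p := Ideal.Quotient.eq.mp hab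
    -- main claim
    have hclaim : ∀ N : ℕ, (π t) ^ n ∈ (maximalIdeal (T ⧸ p)) ^ N := by
      intro N
      set N' := max N (n + 1) with hN'
      have hnN' : n + 1 ≤ N' := le_max_right _ _
      set C := ∑ j ∈ Finset.range (N' - n - 1), d (n + 1 + j) * t ^ j with hC
      set e := (La - Lb) - ∑ i ∈ Finset.range N', d i * t ^ i with he
      have hemem : e ∈ (maximalIdeal T) ^ N' := by
        have h1 := hLspec (fun i => sec (a i)) N'
        have h2 := hLspec (fun i => sec (b i)) N'
        have hsum : ∑ i ∈ Finset.range N', d i * t ^ i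
            = (∑ i ∈ Finset.range N', sec (a i) * t ^ i)
              - (∑ i ∈ Finset.range N', sec (b i) * t ^ i) := by
          rw [← Finset.sum_sub_distrib]
          exact Finset.sum_congr rfl fun i _ => by rw [hd]; ring
        have h3 : e = (La - (∑ i ∈ Finset.range N', sec (a i) * t ^ i))
            - (Lb - (∑ i ∈ Finset.range N', sec (b i) * t ^ i)) := by
          rw [he, hsum]; ring
        rw [h3]
        exact sub_mem h1 h2
      have hfactor : ∑ i ∈ Finset.range N', d i * t ^ i = t ^ n * (d n + t * C) :=
        aux_sum_factor d t n N' hnN' hd0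
      have heq : La - Lb = t ^ n * (d n + t * C) + e := by
        rw [he, hfactor]; ring
      have hpi0 : π (La - Lb) = 0 := Ideal.Quotient.eq_zero_iff_mem.mpr hLab
      have heq2 : (π t) ^ n * (π (d n) + π t * π C) + π e = 0 := by
        rw [← map_pow, ← map_mul, ← map_add, ← map_mul, ← map_add, ← heq, hpi0]
      set u := π (d n) + π t * π C with hu'
      have hu : IsUnit u := by
        by_contra hnu
        have humem : u ∈ maximalIdeal (T ⧸ p) :=
          (mem_maximalIdeal _).mpr (mem_nonunits_iff.mpr hnu)
        have hdn : π (d n) = u - π t * π C := by rw [hu']; ring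
        have : π (d n) ∈ maximalIdeal (T ⧸ p) := by
          rw [hdn]
          exact sub_mem humem (Ideal.mul_mem_right _ _ (hmap t htm))
        exact (mem_nonunits_iff.mp ((mem_maximalIdeal _).mp this)) (hdu.map π)
      have hxe : (π t) ^ n * u = -(π e) := eq_neg_of_add_eq_zero_left heq2
      have hpe : π e ∈ (maximalIdeal (T ⧸ p)) ^ N' := by
        have h1 : π e ∈ ((maximalIdeal T) ^ N').map π := Ideal.mem_map_of_mem π hemem
        rw [Ideal.map_pow] at h1
        exact Ideal.pow_right_mono hMle N' h1
      have hxn : (π t) ^ n ∈ (maximalIdeal (T ⧸ p)) ^ N' := by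
        have h2 : (π t) ^ n = -(π e) * ↑hu.unit⁻¹ :=
          (Units.eq_mul_inv_iff_mul_eq _).mpr (by rw [IsUnit.unit_spec]; exact hxe)
        rw [h2]
        exact Ideal.mul_mem_right _ _ (neg_mem hpe)
      exact Ideal.pow_le_pow_right (le_max_left _ _) hxn
    have hbot : (π t) ^ n ∈ (⊥ : Ideal (T ⧸ p)) := by
      rw [← Ideal.iInf_pow_eq_bot_of_isLocalRing (maximalIdeal (T ⧸ p))
        (maximalIdeal.isMaximal _).ne_top]
      exact Ideal.mem_iInf.mpr hclaim
    rw [Ideal.mem_bot] at hbot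
    have hxne : π t ≠ 0 := fun h0 => htp (Ideal.Quotient.eq_zero_iff_mem.mp h0)
    exact pow_ne_zero n hxne hbot
  exact Cardinal.mk_le_of_injective hinj

/-- If `(T, m)` is a complete local (Noetherian) ring of Krull dimension at least one
and `p` is a nonmaximal prime ideal of `T`, then `|T/p| = |T| ≥ 2^ℵ₀`. -/
theorem card_quotient_eq_card {T : Type*} [CommRing T] [IsLocalRing T]
    [IsNoetherianRing T] [IsAdicComplete (maximalIdeal T) T]
    (hdim : 1 ≤ ringKrullDim T)
    (p : Ideal T) (hp : p.IsPrime) (hpmax : ¬ p.IsMaximal) :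
    #(T ⧸ p) = #T ∧ (2 : Cardinal) ^ Cardinal.aleph0 ≤ #T := by
  have hk2 : (2 : Cardinal) ≤ #(ResidueField T) := by
    rw [Cardinal.two_le_iff]
    exact ⟨0, 1, zero_ne_one⟩
  have hkey := aux_key p hp hpmax
  have harrow : #(ℕ → ResidueField T) = #(ResidueField T) ^ (ℵ₀ : Cardinal) := by
    simp [Cardinal.mk_arrow]
  have hsurj : #(T ⧸ p) ≤ #T := Cardinal.mk_le_of_surjective Ideal.Quotient.mk_surjective
  have hTle := aux_card_T_le (T := T)
  have hmaxle : (max (#(ResidueField T)) ℵ₀ : Cardinal) ≤ #(ResidueField T) ^ (ℵ₀ : Cardinal) := by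
    refine max_le (Cardinal.self_le_power _ Cardinal.one_le_aleph0) ?_
    calc (ℵ₀ : Cardinal) ≤ 2 ^ (ℵ₀ : Cardinal) := (Cardinal.cantor _).le
      _ ≤ #(ResidueField T) ^ (ℵ₀ : Cardinal) := Cardinal.power_le_power_right hk2
  have hT2 : #T ≤ #(ResidueField T) ^ (ℵ₀ : Cardinal) := by
    refine le_trans hTle ?_
    calc (max (#(ResidueField T)) ℵ₀) ^ (ℵ₀ : Cardinal)
        ≤ (#(ResidueField T) ^ (ℵ₀ : Cardinal)) ^ (ℵ₀ : Cardinal) :=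
          Cardinal.power_le_power_right hmaxle
      _ = #(ResidueField T) ^ ((ℵ₀ : Cardinal) * ℵ₀) := by rw [← Cardinal.power_mul]
      _ = #(ResidueField T) ^ (ℵ₀ : Cardinal) := by rw [Cardinal.aleph0_mul_aleph0]
  have hTk : #T ≤ #(T ⧸ p) := hT2.trans (harrow ▸ hkey)
  refine ⟨le_antisymm hsurj hTk, ?_⟩
  calc (2 : Cardinal) ^ Cardinal.aleph0 ≤ #(ResidueField T) ^ (ℵ₀ : Cardinal) :=
        Cardinal.power_le_power_right hk2
    _ = #(ℕ → ResidueField T) := harrow.symm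
    _ ≤ #(T ⧸ p) := hkey
    _ ≤ #T := hsurj
end

section
/- Let (T, m) be a complete local (Noetherian) ring, let D be a subset of T, let C be a subset of Spec T with m ∉ C, and let a be an ideal of T such that a is not contained in p for every p ∈ C. If C and D are countable, then a is not contained in the union over all t ∈ D and p ∈ C of the cosets t + p. -/
open IsLocalRing

/-- Krull intersection: ideals are closed in the maximal-adic topology of a
Noetherian local ring. -/
private lemma mem_of_forall_mem_sup_pow {T : Type*} [CommRing T] [IsLocalRing T]
    [IsNoetherianRing T] {J : Ideal T} {x : T}
    (h : ∀ n : ℕ, x ∈ J ⊔ maximalIdeal T ^ n) : x ∈ J := by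
  have hbot : (⨅ i : ℕ, maximalIdeal T ^ i • ⊤ : Submodule T (T ⧸ J)) = ⊥ :=
    Ideal.iInf_pow_smul_eq_bot_of_isLocalRing (I := maximalIdeal T) (M := T ⧸ J)
      (IsLocalRing.maximalIdeal.isMaximal T).ne_top
  have hx : Ideal.Quotient.mk J x ∈ (⨅ i : ℕ, maximalIdeal T ^ i • ⊤ : Submodule T (T ⧸ J)) := by
    rw [Submodule.mem_iInf]
    intro i
    obtain ⟨y, hy, z, hz, hyz⟩ := Submodule.mem_sup.mp (h i)
    have h1 : Ideal.Quotient.mk J x = Ideal.Quotient.mk J z := by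
      rw [Ideal.Quotient.mk_eq_mk_iff_sub_mem]
      simpa [← hyz] using hy
    have h2 : (z : T) • (1 : T ⧸ J) = Ideal.Quotient.mk J z := by
      simp [Algebra.smul_def]
    rw [h1, ← h2]
    exact Submodule.smul_mem_smul hz Submodule.mem_top
  rw [hbot] at hx
  exact (Ideal.Quotient.eq_zero_iff_mem).mp hx

/-- Avoidance step: given an ideal `J` not contained in the prime `p`, one can
perturb `c` by an element of `J` so as to avoid the coset `t + p`. -/
private lemma avoid_step {T : Type*} [CommRing T] (c t : T) (p : Ideal T)
    (J : Ideal T) (hJ : ¬ J ≤ p) :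
    ∃ y ∈ J, (c + y) - t ∉ p := by
  obtain ⟨y, hyJ, hyp⟩ := SetLike.not_le_iff_exists.mp hJ
  by_cases h : (c + y) - t ∈ p
  · refine ⟨y + y, J.add_mem hyJ hyJ, fun h2 => hyp ?_⟩
    have : (c + (y + y) - t) - (c + y - t) ∈ p := p.sub_mem h2 h
    simpa using this
  · exact ⟨y, hyJ, h⟩

private lemma pow_not_le {T : Type*} [CommRing T] {p : Ideal T} (hp : p.IsPrime)
    {I : Ideal T} (hI : ¬ I ≤ p) (n : ℕ) : ¬ I ^ n ≤ p := by
  cases n with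
  | zero =>
    simp only [pow_zero, Ideal.one_eq_top, top_le_iff]
    exact fun h => hp.ne_top (top_le_iff.mp (le_of_eq h.symm))
  | succ k =>
    intro h
    exact hI ((hp.pow_le_iff (Nat.succ_ne_zero k)).mp h)

/-- **Heitmann, Lemma 2** (countable prime avoidance for cosets). Let `(T, m)` be a
complete local (Noetherian) ring, `D ⊆ T`, `C` a set of prime ideals of `T` with
`m ∉ C`, and `a` an ideal of `T` not contained in any member of `C`. If `C` and `D`
are countable, then `a` is not contained in `⋃ {t + p | t ∈ D, p ∈ C}`. -/
theorem countable_coset_avoidance {T : Type*} [CommRing T] [IsLocalRing T]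
    [IsNoetherianRing T] [IsAdicComplete (maximalIdeal T) T]
    (D : Set T) (C : Set (Ideal T)) (hCprime : ∀ p ∈ C, p.IsPrime)
    (hm : maximalIdeal T ∉ C)
    (a : Ideal T) (ha : ∀ p ∈ C, ¬ a ≤ p)
    (hC : C.Countable) (hD : D.Countable) :
    ¬ (a : Set T) ⊆ ⋃ (t ∈ D) (p ∈ C), {x : T | x - t ∈ p} := by
  intro hsub
  rcases D.eq_empty_or_nonempty with rfl | hDne
  · simpa using hsub a.zero_mem
  rcases C.eq_empty_or_nonempty with rfl | hCne
  · simpa using hsub a.zero_mem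
  -- enumerate the pairs
  obtain ⟨f, hf⟩ := (hD.prod hC).exists_surjective (hDne.prod hCne)
  set t : ℕ → T := fun i => ((f i) : T × Ideal T).1 with ht
  set p : ℕ → Ideal T := fun i => ((f i) : T × Ideal T).2 with hp
  have hmemDC : ∀ i, t i ∈ D ∧ p i ∈ C := fun i => (f i).2
  have hprime : ∀ i, (p i).IsPrime := fun i => hCprime _ (hmemDC i).2
  have hap : ∀ i, ¬ a ≤ p i := fun i => ha _ (hmemDC i).2
  have hmp : ∀ i, ¬ maximalIdeal T ≤ p i := by
    intro i hle
    exact hm (le_antisymm (le_maximalIdeal (hprime i).ne_top) hle ▸ (hmemDC i).2)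
  set m : Ideal T := maximalIdeal T with hmdef
  -- Good states and steps
  set Good : ℕ → T × ℕ → Prop :=
    fun i s => s.1 ∈ a ∧ i ≤ s.2 ∧ s.1 - t i ∉ p i ⊔ m ^ s.2 with hGood
  set Step : ℕ → T × ℕ → T × ℕ → Prop :=
    fun i s s' => s.2 < s'.2 ∧ s'.1 - s.1 ∈ m ^ s.2 with hStep
  -- given c ∈ a avoiding the coset t i + p i, find a large exponent
  have exp : ∀ i (c : T) (k : ℕ), c - t i ∉ p i → ∃ n, k ≤ n ∧ c - t i ∉ p i ⊔ m ^ n := by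
    intro i c k hc
    by_contra hcon
    push_neg at hcon
    apply hc
    apply mem_of_forall_mem_sup_pow (J := p i)
    intro n
    have := hcon (max k n) (le_max_left _ _)
    exact (sup_le_sup_left (Ideal.pow_le_pow_right (le_max_right k n)) (p i) : p i ⊔ m ^ max k n ≤ p i ⊔ m ^ n) this
  have hs0 : ∃ s, Good 0 s := by
    obtain ⟨y, hy, hyp⟩ := avoid_step 0 (t 0) (p 0) a (hap 0)
    obtain ⟨n, hn, hn2⟩ := exp 0 (0 + y) 0 hyp
    exact ⟨(0 + y, n), by simpa using hy, hn, hn2⟩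
  have hstep : ∀ i s, Good i s → ∃ s', Good (i + 1) s' ∧ Step i s s' := by
    rintro i ⟨c, n⟩ ⟨hc, hin, _⟩
    have hJ : ¬ m ^ n * a ≤ p (i + 1) :=
      fun h => (Or.elim ((hprime (i+1)).mul_le.mp h)
        (pow_not_le (hprime (i+1)) (hmp (i+1)) n) (hap (i+1)))
    obtain ⟨y, hy, hyp⟩ := avoid_step c (t (i + 1)) (p (i + 1)) (m ^ n * a) hJ
    obtain ⟨n', hn', hn'2⟩ := exp (i + 1) (c + y) (max (n + 1) (i + 1)) hyp
    refine ⟨(c + y, n'), ⟨a.add_mem hc (Ideal.mul_le_right hy), le_trans (le_max_right _ _) hn', hn'2⟩,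
      lt_of_lt_of_le (Nat.lt_succ_self n) (le_trans (le_max_left _ _) hn'), by
        simpa using Ideal.mul_le_left hy⟩
  choose! next hnext1 hnext2 using hstep
  obtain ⟨s0, hgs0⟩ := hs0
  set g : ℕ → T × ℕ := fun i => Nat.rec s0 (fun i s => next i s) i with hg
  have hgood : ∀ i, Good i (g i) := by
    intro i
    induction i with
    | zero => exact hgs0
    | succ i ih => exact hnext1 i (g i) ih
  have hgstep : ∀ i, Step i (g i) (g (i + 1)) := fun i => hnext2 i (g i) (hgood i)
  set c : ℕ → T := fun i => (g i).1 with hc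
  set n : ℕ → ℕ := fun i => (g i).2 with hn
  have hnmono : StrictMono n := strictMono_nat_of_lt_succ fun i => (hgstep i).1
  have hni : ∀ i, i ≤ n i := fun i => (hgood i).2.1
  have hca : ∀ i, c i ∈ a := fun i => (hgood i).1
  -- differences
  have hdiff : ∀ j i, j ≤ i → c i - c j ∈ m ^ n j := by
    intro j i hji
    induction i with
    | zero =>
      obtain rfl : j = 0 := Nat.le_zero.mp hji
      simpa only [sub_self] using (m ^ n 0).zero_mem
    | succ i ih =>
      rcases eq_or_lt_of_le hji with rfl | h
      · simpa only [sub_self] using (m ^ n (i + 1)).zero_mem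
      · have hji' : j ≤ i := Nat.lt_succ_iff.mp h
        have h1 := ih hji'
        have h2 : c (i + 1) - c i ∈ m ^ n i := (hgstep i).2
        have h3 : c (i + 1) - c i ∈ m ^ n j :=
          Ideal.pow_le_pow_right (hnmono.monotone hji') h2
        have heq : c (i + 1) - c j = (c (i + 1) - c i) + (c i - c j) := by ring
        rw [heq]
        exact Submodule.add_mem _ h3 h1
  -- invariant propagates
  have hinv : ∀ j i, j ≤ i → c i - t j ∉ p j ⊔ m ^ n j := by
    intro j i hji hmem
    apply (hgood j).2.2
    have h1 : c i - c j ∈ m ^ n j := hdiff j i hji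
    have : c j - t j = (c i - t j) - (c i - c j) := by ring
    rw [this]
    exact Submodule.sub_mem _ hmem (le_sup_right (α := Ideal T) h1)
  -- Cauchy sequence, take limit
  have hcauchy : ∀ {i j : ℕ}, i ≤ j → c i ≡ c j [SMOD (m ^ i • ⊤ : Ideal T)] := by
    intro i j hij
    rw [SModEq.sub_mem]
    have : c j - c i ∈ m ^ n i := hdiff i j hij
    have h2 : (m : Ideal T) ^ n i ≤ m ^ i := Ideal.pow_le_pow_right (hni i)
    have : c i - c j ∈ m ^ i := by
      have := (m ^ i).neg_mem (h2 this); simpa using this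
    simpa using this
  obtain ⟨L, hL⟩ := IsPrecomplete.prec (IsAdicComplete.toIsPrecomplete (I := m) (M := T)) hcauchy
  have hLc : ∀ i, L - c i ∈ m ^ i := by
    intro i
    have := (SModEq.sub_mem).mp (hL i)
    have := (m ^ i • ⊤ : Ideal T).neg_mem this
    simpa using this
  -- L ∈ a
  have hLa : L ∈ a := by
    apply mem_of_forall_mem_sup_pow (J := a)
    intro k
    have : L = c k + (L - c k) := by ring
    rw [this]
    exact Submodule.add_mem _ (le_sup_left (α := Ideal T) (hca k)) (le_sup_right (α := Ideal T) (hLc k))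
  -- L lies in some coset
  have := hsub hLa
  simp only [Set.mem_iUnion] at this
  obtain ⟨t0, ht0, p0, hp0, hLt⟩ := this
  obtain ⟨j, hj⟩ := hf ⟨(t0, p0), Set.mk_mem_prod ht0 hp0⟩
  have htj : t j = t0 := by
    rw [show t j = ((f j : T × Ideal T)).1 from rfl, hj]
  have hpj : p j = p0 := by
    rw [show p j = ((f j : T × Ideal T)).2 from rfl, hj]
  -- contradiction
  set i := max j (n j) with hi
  apply hinv j i (le_max_left _ _)
  have h1 : L - c i ∈ m ^ n j :=
    Ideal.pow_le_pow_right (le_max_right _ _) (hLc i)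
  have h2 : L - t j ∈ p j := by rw [htj, hpj]; exact hLt
  have : c i - t j = (L - t j) - (L - c i) := by ring
  rw [this]
  exact Submodule.sub_mem _ (le_sup_left (α := Ideal T) h2) (le_sup_right (α := Ideal T) h1)
end

section
/- Let (T, m) be a local (Noetherian) ring, let D be a subset of T, let C be a subset of Spec T, and let a be an ideal of T such that a is not contained in p for every p ∈ C. If the cardinality of C × D is strictly less than the cardinality of T/m, then a is not contained in the union over all t ∈ D and p ∈ C of the cosets t + p. -/
open IsLocalRing Cardinal

lemma coset_avoid_aux {T : Type*} [CommRing T] [IsLocalRing T]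
    (D : Set T) (C : Set (Ideal T)) (hCprime : ∀ p ∈ C, p.IsPrime)
    (hcard : #(C × D) < #(T ⧸ maximalIdeal T)) (s : Finset T) :
    ∃ z ∈ Ideal.span (s : Set T),
      ∀ t ∈ D, ∀ p ∈ C, ¬ Ideal.span (s : Set T) ≤ p → z - t ∉ p := by
  classical
  induction s using Finset.induction_on with
  | empty =>
      refine ⟨0, Ideal.zero_mem _, fun t ht p hp hnle => ?_⟩
      exact absurd (by simp : Ideal.span ((∅ : Finset T) : Set T) ≤ p) hnle
  | @insert x s' hx ih =>
      obtain ⟨y, hyJ, hy⟩ := ih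
      -- bad residue classes
      let g : ↥C × ↥D → T ⧸ maximalIdeal T := fun q =>
        if h : ∃ r : T, y + r * x - (q.2 : T) ∈ (q.1 : Ideal T) ∧ x ∉ (q.1 : Ideal T) then
          Ideal.Quotient.mk _ h.choose
        else 0
      have hlt : #(Set.range g) < #(T ⧸ maximalIdeal T) :=
        lt_of_le_of_lt Cardinal.mk_range_le hcard
      have hne : Set.range g ≠ Set.univ := by
        intro h
        rw [h, Cardinal.mk_univ] at hlt
        exact lt_irrefl _ hlt
      obtain ⟨c, hc⟩ := Set.ne_univ_iff_exists_notMem _ |>.mp hne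
      obtain ⟨r, hr⟩ := Ideal.Quotient.mk_surjective c
      refine ⟨y + r * x, ?_, ?_⟩
      · refine Ideal.add_mem _ ?_ ?_
        · exact Ideal.span_mono (by simp [Finset.coe_subset]) hyJ
        · exact Ideal.mul_mem_left _ r (Ideal.subset_span (by simp))
      · intro t ht p hp hnle hmem
        have hple : p ≤ maximalIdeal T := le_maximalIdeal (hCprime p hp).ne_top
        by_cases hxp : x ∈ p
        · have hnle' : ¬ Ideal.span (s' : Set T) ≤ p := by
            intro h
            apply hnle
            rw [Finset.coe_insert, Ideal.span_insert]
            exact sup_le ((Ideal.span_singleton_le_iff_mem p).mpr hxp) h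
          apply hy t ht p hp hnle'
          have heq : y - t = (y + r * x - t) - r * x := by ring
          rw [heq]
          exact p.sub_mem hmem (p.mul_mem_left r hxp)
        · have hex : ∃ r' : T, y + r' * x - t ∈ p ∧ x ∉ p := ⟨r, hmem, hxp⟩
          apply hc
          refine ⟨(⟨⟨p, hp⟩, ⟨t, ht⟩⟩ : ↥C × ↥D), ?_⟩
          have hgval : g (⟨⟨p, hp⟩, ⟨t, ht⟩⟩ : ↥C × ↥D) = Ideal.Quotient.mk _ hex.choose := by
            simp only [g]
            rw [dif_pos hex]
          rw [hgval, ← hr]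
          obtain ⟨h1, h2⟩ := hex.choose_spec
          have hsub : (hex.choose - r) * x ∈ p := by
            have : (hex.choose - r) * x = (y + hex.choose * x - t) - (y + r * x - t) := by ring
            rw [this]
            exact p.sub_mem h1 hmem
          have hdiff : hex.choose - r ∈ p :=
            ((hCprime p hp).mem_or_mem hsub).resolve_right hxp
          exact Ideal.Quotient.eq.mpr (hple hdiff)

/-- **Heitmann, Lemma 3** (cardinal prime avoidance for cosets). Let `(T, m)` be a local
(Noetherian) ring, `D ⊆ T`, `C` a set of prime ideals of `T`, and `a` an ideal of `T`
not contained in any member of `C`. If `|C × D| < |T/m|`, then `a` is not contained in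
`⋃ {t + p | t ∈ D, p ∈ C}`. -/
theorem coset_avoidance {T : Type*} [CommRing T] [IsLocalRing T] [IsNoetherianRing T]
    (D : Set T) (C : Set (Ideal T)) (hCprime : ∀ p ∈ C, p.IsPrime)
    (a : Ideal T) (ha : ∀ p ∈ C, ¬ a ≤ p)
    (hcard : #(C × D) < #(T ⧸ maximalIdeal T)) :
    ¬ (a : Set T) ⊆ ⋃ (t ∈ D) (p ∈ C), {x : T | x - t ∈ p} := by
  intro hsub
  obtain ⟨s, hs⟩ : a.FG := IsNoetherian.noetherian a
  obtain ⟨z, hz, hzav⟩ := coset_avoid_aux D C hCprime hcard s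
  rw [hs] at hz hzav
  have := hsub hz
  simp only [Set.mem_iUnion, Set.mem_setOf_eq] at this
  obtain ⟨t, ht, p, hp, hmem⟩ := this
  exact hzav t ht p hp (ha p hp) hmem
end

section
/- Let (T, m) be a complete local ring and let R₀ be a Z_d-subring of T with distinguished set Q_{R₀}. Let P be a nonmaximal prime ideal of T such that P ∩ R₀ = (0). Let Ω be a well-ordered set with least element 0, and assume either Ω is countable or, for all β ∈ Ω, |{γ ∈ Ω : γ < β}| < |T/m|. Suppose {R_β : β ∈ Ω} is an ascending collection of rings such that R_α ∩ P = (0) for every α ∈ Ω, such that if β is a limit ordinal then R_β = ∪_{γ<β} R_γ with Q_{R_β} = ∪_{γ<β} Q_{R_γ}, and such that if β = γ + 1 then R_β is an A₊-extension of R_γ. Then S = ∪_{β∈Ω} R_β satisfies all the conditions to be a Z_d-subring of T with distinguished set Q_S = ∪_{β∈Ω} Q_{R_β} except the cardinality condition, and instead |S| ≤ sup(ℵ₀, |R₀|, |Ω|). Furthermore, P ∩ S = (0), elements which are prime in some R_β remain prime in S, and Q_{R₀} ⊆ Q_S. -/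
universe u

open IsLocalRing Cardinal

/-- The height of an ideal: infimum of heights of primes containing it. -/
noncomputable def idealHt {T : Type*} [CommRing T] (I : Ideal T) : ℕ∞ :=
  ⨅ (p : PrimeSpectrum T) (_ : I ≤ p.asIdeal), Order.height p

/-- `specHt T k` is the set of height-`k` prime ideals of `T`. -/
def specHt (T : Type*) [CommRing T] (k : ℕ) : Set (Ideal T) :=
  {q | q.IsPrime ∧ idealHt q = (k : ℕ∞)}

/-- All the conditions of being a `Z_d`-subring of `T` with distinguished set `Q`
except the cardinality condition. -/
def ZdConditions {T : Type*} [CommRing T] [IsLocalRing T] (d : ℕ) (R : Subring T)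
    (Q : Set (Ideal T)) : Prop :=
  -- `R` is quasi-local with maximal ideal `m ∩ R`
  (∀ x : R, IsUnit x ↔ (x : T) ∉ maximalIdeal T) ∧
  -- `R` is a unique factorization domain
  (∃ hdom : IsDomain R,
    UniqueFactorizationMonoid R) ∧
  -- (ii) `q ∩ R = (0)` for all `q ∈ Ass T`
  (∀ q ∈ associatedPrimes T T, Ideal.comap R.subtype q = ⊥) ∧
  -- (iii) if `t` is regular and `q ∈ Ass (T/tT)` then `ht (q ∩ R) ≤ 1`
  (∀ t ∈ nonZeroDivisors T, ∀ q ∈ associatedPrimes T (T ⧸ Ideal.span {t}),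
    idealHt (Ideal.comap R.subtype q) ≤ 1) ∧
  -- (iv) `Q ⊆ Spec_d T` and `q ↦ q ∩ R` is a bijection from `Q` onto `Spec_1 R`
  (Q ⊆ specHt T d ∧
    Set.BijOn (fun q => Ideal.comap R.subtype q) Q (specHt (↥R) 1))

/-- `R` is a `Z_d`-subring of `T` with distinguished set `Q`. -/
def IsZdSubring {T : Type*} [CommRing T] [IsLocalRing T] (d : ℕ) (R : Subring T)
    (Q : Set (Ideal T)) : Prop :=
  ZdConditions d R Q ∧
  -- (i) `|R| ≤ sup(ℵ₀, |T/m|)`, with equality only if `T/m` is countable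
  (#R ≤ max ℵ₀ #(ResidueField T) ∧
    (#R = max ℵ₀ #(ResidueField T) → #(ResidueField T) ≤ ℵ₀))

/-- `S` is an `A₊`-extension of `R` (both `Z_d`-subrings of `T`, with distinguished
sets `QR` and `QS`). -/
def IsAPlusExtension {T : Type*} [CommRing T] [IsLocalRing T] (d : ℕ) (R S : Subring T)
    (QR QS : Set (Ideal T)) : Prop :=
  IsZdSubring d R QR ∧ IsZdSubring d S QS ∧
  ∃ hle : R ≤ S,
    -- (i) prime elements of `R` are prime in `S`
    (∀ r : R, Prime r → Prime (Subring.inclusion hle r)) ∧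
    -- (ii) `|S| ≤ sup(ℵ₀, |R|)`
    #S ≤ max ℵ₀ #R ∧
    -- (iii) `QR ⊆ QS`
    QR ⊆ QS

/-- `depth T > 1`: there is a regular sequence of length two inside the maximal ideal. -/
def DepthGTOne (T : Type*) [CommRing T] [IsLocalRing T] : Prop :=
  ∃ x y : T, x ∈ maximalIdeal T ∧ y ∈ maximalIdeal T ∧ x ∈ nonZeroDivisors T ∧
    Ideal.Quotient.mk (Ideal.span {x}) y ∈ nonZeroDivisors (T ⧸ Ideal.span {x})

/-- `T` is equidimensional: `dim (T/p) = dim T` for every minimal prime `p`. -/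
def IsEquidim (T : Type*) [CommRing T] : Prop :=
  ∀ p ∈ minimalPrimes T, ringKrullDim (T ⧸ p) = ringKrullDim T

/-- `β` is the successor of `γ` in the well-ordered set `Ω`. -/
def IsSuccOf {Ω : Type*} [LinearOrder Ω] (β γ : Ω) : Prop :=
  γ < β ∧ ∀ δ : Ω, γ < δ → β ≤ δ

/-- `β` is a limit element: it is neither the least element nor a successor. -/
def IsLimitElem {Ω : Type*} [LinearOrder Ω] [OrderBot Ω] (β : Ω) : Prop :=
  β ≠ ⊥ ∧ ¬ ∃ γ : Ω, IsSuccOf β γ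

lemma two_le_height {α : Type*} [Preorder α] {a b c : α} (h1 : a < b) (h2 : b < c) :
    2 ≤ Order.height c := by
  have := Order.length_le_height_last
    (p := ((RelSeries.singleton {(a, b) : α × α | a < b} a).snoc b (by simpa using h1)).snoc c (by simpa using h2))
  simpa using this

lemma one_le_height {α : Type*} [Preorder α] {a b : α} (h1 : a < b) :
    1 ≤ Order.height b := by
  have := Order.length_le_height_last (p := (RelSeries.singleton {(a, b) : α × α | a < b} a).snoc b (by simpa using h1))
  simpa using this

lemma height_le_one_of {α : Type*} [Preorder α] {x : α}
    (h : ∀ a b : α, a < b → b < x → False) : Order.height x ≤ 1 := by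
  apply Order.height_le
  intro p hlast
  by_contra hlen
  push_neg at hlen
  have h2 : 2 ≤ p.length := by exact_mod_cast hlen
  have e1 : (⟨p.length - 2, by omega⟩ : Fin (p.length + 1)) < ⟨p.length - 1, by omega⟩ := by
    simp [Fin.lt_def]; omega
  have e2 : (⟨p.length - 1, by omega⟩ : Fin (p.length + 1)) < Fin.last _ := by
    simp [Fin.lt_def, Fin.last]; omega
  exact h _ _ (p.strictMono e1) (hlast ▸ p.strictMono e2)

lemma idealHt_eq_height {T : Type*} [CommRing T] {p : Ideal T} (hp : p.IsPrime) :
    idealHt p = Order.height (⟨p, hp⟩ : PrimeSpectrum T) := by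
  apply le_antisymm
  · exact iInf₂_le (⟨p, hp⟩ : PrimeSpectrum T) le_rfl
  · exact le_iInf₂ fun q hq => Order.height_mono (show (⟨p, hp⟩ : PrimeSpectrum T) ≤ q from hq)

lemma eq_bot_of_lt_span_prime {A : Type*} [CommRing A] [IsDomain A]
    [WfDvdMonoid A] {s : A} (hs : Prime s) {q : Ideal A} (hq : q.IsPrime)
    (hlt : q < Ideal.span {s}) : q = ⊥ := by
  have hsq : s ∉ q := by
    intro h
    exact hlt.not_ge (Ideal.span_le.mpr (Set.singleton_subset_iff.mpr h))
  have key : ∀ x : A, x ∈ q → x = 0 := by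
    intro x
    induction x using (wellFounded_dvdNotUnit (α := A)).induction with
    | _ x ih =>
      intro hx
      by_cases hx0 : x = 0
      · exact hx0
      obtain ⟨y, rfl⟩ := Ideal.mem_span_singleton.mp (hlt.le hx)
      have hy : y ∈ q := (hq.mem_or_mem hx).resolve_left hsq
      have hd : DvdNotUnit y (s * y) :=
        ⟨fun h => hx0 (by simp [h]), s, hs.not_unit, mul_comm s y⟩
      have := ih y hd hy
      simp [this]
  exact le_antisymm (fun x hx => Ideal.mem_bot.mpr (key x hx)) bot_le

lemma comap_isPrime {A B : Type*} [CommRing A] [CommRing B] (f : A →+* B) (q : Ideal B)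
    (hq : q.IsPrime) : (Ideal.comap f q).IsPrime := by
  haveI := hq; exact Ideal.IsPrime.comap f

section UnionLemma

variable {T : Type u} [CommRing T] [IsLocalRing T]

set_option maxHeartbeats 2000000 in
theorem zd_union_lemma (d : ℕ) {ι : Type*} [LinearOrder ι] [Nonempty ι]
    {R : ι → Subring T} {Q : ι → Set (Ideal T)}
    (hmono : Monotone R) (hQmono : Monotone Q)
    (hzd : ∀ i, ZdConditions d (R i) (Q i))
    (hprime : ∀ i j (h : i ≤ j), ∀ x : R i, Prime x →
      Prime (Subring.inclusion (hmono h) x))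
    (S : Subring T) (hS : (S : Set T) = ⋃ i, (R i : Set T))
    (QS : Set (Ideal T)) (hQS : QS = ⋃ i, Q i) :
    ZdConditions d S QS ∧
      ∀ i, ∀ x : R i, Prime x → ∀ hle : R i ≤ S, Prime (Subring.inclusion hle x) := by
  have hmemS : ∀ x : T, x ∈ S ↔ ∃ i, x ∈ R i := by
    intro x
    rw [← SetLike.mem_coe, hS]
    simp
  have hle : ∀ i, R i ≤ S := fun i x hx => (hmemS x).mpr ⟨i, hx⟩
  have up2 : ∀ (i0 : ι) (x y : T), x ∈ S → y ∈ S →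
      ∃ j, i0 ≤ j ∧ x ∈ R j ∧ y ∈ R j := by
    intro i0 x y hx hy
    obtain ⟨i1, h1⟩ := (hmemS x).mp hx
    obtain ⟨i2, h2⟩ := (hmemS y).mp hy
    exact ⟨max i0 (max i1 i2), le_max_left _ _,
      hmono ((le_max_left i1 i2).trans (le_max_right _ _)) h1,
      hmono ((le_max_right i1 i2).trans (le_max_right _ _)) h2⟩
  have up3 : ∀ (i0 : ι) (x y z : T), x ∈ S → y ∈ S → z ∈ S →
      ∃ j, i0 ≤ j ∧ x ∈ R j ∧ y ∈ R j ∧ z ∈ R j := by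
    intro i0 x y z hx hy hz
    obtain ⟨j, hj, hxj, hyj⟩ := up2 i0 x y hx hy
    obtain ⟨i3, h3⟩ := (hmemS z).mp hz
    exact ⟨max j i3, hj.trans (le_max_left _ _), hmono (le_max_left _ _) hxj,
      hmono (le_max_left _ _) hyj, hmono (le_max_right _ _) h3⟩
  -- quasi-local
  have hqlS : ∀ x : S, IsUnit x ↔ (x : T) ∉ maximalIdeal T := by
    intro x
    constructor
    · intro hx
      obtain ⟨y, hy⟩ := isUnit_iff_exists_inv.mp hx
      obtain ⟨i, hi, hxi, hyi⟩ := up2 (Classical.arbitrary ι) (x : T) (y : T) x.2 y.2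
      have hmul : (⟨(x : T), hxi⟩ : R i) * ⟨(y : T), hyi⟩ = 1 := Subtype.ext (by have h9 := congrArg Subtype.val hy; exact h9)
      exact ((hzd i).1 ⟨(x : T), hxi⟩).mp (IsUnit.of_mul_eq_one _ hmul)
    · intro hx
      obtain ⟨i, hxi⟩ := (hmemS (x : T)).mp x.2
      obtain ⟨z, hz⟩ := isUnit_iff_exists_inv.mp (((hzd i).1 ⟨(x : T), hxi⟩).mpr hx)
      refine isUnit_iff_exists_inv.mpr ⟨⟨(z : T), hle i z.2⟩, Subtype.ext (by have h9 := congrArg Subtype.val hz; exact h9)⟩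
  -- domain
  haveI hntS : Nontrivial S := nontrivial_of_ne 0 1
    (fun h => zero_ne_one (congrArg Subtype.val h : (0 : T) = 1))
  haveI hdomS : IsDomain S := by
    haveI : NoZeroDivisors S := by
      constructor
      intro a b hab
      obtain ⟨i, _, hai, hbi⟩ := up2 (Classical.arbitrary ι) (a : T) (b : T) a.2 b.2
      obtain ⟨hdi, -⟩ := (hzd i).2.1
      haveI := hdi
      have hmul : (⟨(a : T), hai⟩ : R i) * ⟨(b : T), hbi⟩ = 0 := Subtype.ext (by have h9 := congrArg Subtype.val hab; exact h9)
      rcases mul_eq_zero.mp hmul with h | h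
      · exact Or.inl (Subtype.ext (by have h9 := congrArg Subtype.val h; exact h9))
      · exact Or.inr (Subtype.ext (by have h9 := congrArg Subtype.val h; exact h9))
    exact NoZeroDivisors.to_isDomain S
  -- primes transfer into S
  have hprimeS : ∀ i (x : R i), Prime x → Prime (⟨(x : T), hle i x.2⟩ : S) := by
    intro i x hx
    refine ⟨fun h0 => hx.ne_zero (Subtype.ext (by have h9 := congrArg Subtype.val h0; exact h9)), ?_, ?_⟩
    · intro hu
      exact hx.not_unit (((hzd i).1 x).mpr ((hqlS _).mp hu))
    · rintro a b ⟨c, hc⟩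
      obtain ⟨j, hij, haj, hbj, hcj⟩ := up3 i (a : T) (b : T) (c : T) a.2 b.2 c.2
      have hxj : (x : T) ∈ R j := hmono hij x.2
      have hpj : Prime (⟨(x : T), hxj⟩ : R j) := by
        have h := hprime i j hij x hx
        exact (show Subring.inclusion (hmono hij) x = ⟨(x : T), hxj⟩ from Subtype.ext rfl) ▸ h
      have hdvd : (⟨(x : T), hxj⟩ : R j) ∣ ⟨(a : T), haj⟩ * ⟨(b : T), hbj⟩ :=
        ⟨⟨(c : T), hcj⟩, Subtype.ext (by have h9 := congrArg Subtype.val hc; exact h9)⟩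
      rcases hpj.2.2 _ _ hdvd with ⟨e, he⟩ | ⟨e, he⟩
      · exact Or.inl ⟨⟨(e : T), hle j e.2⟩, Subtype.ext (by have h9 := congrArg Subtype.val he; exact h9)⟩
      · exact Or.inr ⟨⟨(e : T), hle j e.2⟩, Subtype.ext (by have h9 := congrArg Subtype.val he; exact h9)⟩
  -- UFD
  have hufmS : UniqueFactorizationMonoid S := by
    apply UniqueFactorizationMonoid.of_exists_prime_factors
    intro a ha
    obtain ⟨i, hai⟩ := (hmemS (a : T)).mp a.2
    obtain ⟨hdi, hui⟩ := (hzd i).2.1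
    haveI := hdi
    haveI := hui
    obtain ⟨f, hfp, hfa⟩ := UniqueFactorizationMonoid.exists_prime_factors (⟨(a : T), hai⟩ : R i)
      (fun h => ha (Subtype.ext (by have h9 := congrArg Subtype.val h; exact h9)))
    refine ⟨f.map (Subring.inclusion (hle i)), ?_, ?_⟩
    · intro b hb
      obtain ⟨b', hb', rfl⟩ := Multiset.mem_map.mp hb
      have h := hprimeS i b' (hfp b' hb')
      exact (show (⟨(b' : T), hle i b'.2⟩ : S) = Subring.inclusion (hle i) b'
        from Subtype.ext rfl) ▸ h
    · have h1 : (f.map (Subring.inclusion (hle i))).prod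
          = Subring.inclusion (hle i) f.prod := (map_multiset_prod _ _).symm
      rw [h1]
      have h2 := hfa.map (Subring.inclusion (hle i))
      exact (show Subring.inclusion (hle i) (⟨(a : T), hai⟩ : R i) = a
        from Subtype.ext rfl) ▸ h2
  -- contraction lemma for heights
  have contract : ∀ (q : Ideal T) (hq : q.IsPrime)
      (hqS : (Ideal.comap S.subtype q).IsPrime) (i0 : ι),
      (∀ j, i0 ≤ j → idealHt (Ideal.comap (R j).subtype q) ≤ 1) →
      Order.height (⟨Ideal.comap S.subtype q, hqS⟩ : PrimeSpectrum S) ≤ 1 := by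
    intro q hq hqS i0 hsmall
    apply height_le_one_of
    intro a b hab hbq
    obtain ⟨x, hxb, hxa⟩ := SetLike.exists_of_lt ((PrimeSpectrum.asIdeal_lt_asIdeal a b).mpr hab)
    obtain ⟨y, hyq, hyb⟩ := SetLike.exists_of_lt
      ((PrimeSpectrum.asIdeal_lt_asIdeal b _).mpr hbq)
    obtain ⟨j, hij, hxj, hyj⟩ := up2 i0 (x : T) (y : T) x.2 y.2
    have hq'p : (Ideal.comap (R j).subtype q).IsPrime := comap_isPrime _ _ hq
    set φ : (R j) →+* S := Subring.inclusion (hle j) with hφ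
    have hφval : ∀ z : R j, ((φ z : S) : T) = (z : T) := fun z => rfl
    have ha'p : (Ideal.comap φ a.asIdeal).IsPrime := comap_isPrime _ _ a.2
    have hb'p : (Ideal.comap φ b.asIdeal).IsPrime := comap_isPrime _ _ b.2
    have hxmem : (⟨(x : T), hxj⟩ : R j) ∈ Ideal.comap φ b.asIdeal :=
      Ideal.mem_comap.mpr (by
        have : φ ⟨(x : T), hxj⟩ = x := Subtype.ext rfl
        rw [this]; exact hxb)
    have hymem : (⟨(y : T), hyj⟩ : R j) ∈ Ideal.comap (R j).subtype q :=
      Ideal.mem_comap.mpr (show (y : T) ∈ q from Ideal.mem_comap.mp hyq)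
    have l1 : Ideal.comap φ a.asIdeal < Ideal.comap φ b.asIdeal := by
      refine lt_of_le_not_ge (Ideal.comap_mono (le_of_lt
        ((PrimeSpectrum.asIdeal_lt_asIdeal a b).mpr hab))) fun hcon => ?_
      have := hcon hxmem
      have : φ ⟨(x : T), hxj⟩ ∈ a.asIdeal := Ideal.mem_comap.mp this
      rw [show φ ⟨(x : T), hxj⟩ = x from Subtype.ext rfl] at this
      exact hxa this
    have l2 : Ideal.comap φ b.asIdeal < Ideal.comap (R j).subtype q := by
      refine lt_of_le_not_ge (fun z hz => ?_) fun hcon => ?_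
      · have hzb : φ z ∈ b.asIdeal := Ideal.mem_comap.mp hz
        have : φ z ∈ Ideal.comap S.subtype q :=
          (le_of_lt ((PrimeSpectrum.asIdeal_lt_asIdeal b _).mpr hbq)) hzb
        exact Ideal.mem_comap.mpr (show ((z : T)) ∈ q from Ideal.mem_comap.mp this)
      · have := hcon hymem
        have : φ ⟨(y : T), hyj⟩ ∈ b.asIdeal := Ideal.mem_comap.mp this
        rw [show φ ⟨(y : T), hyj⟩ = y from Subtype.ext rfl] at this
        exact hyb this
    have h2 : (2 : ℕ∞) ≤ Order.height
        (⟨Ideal.comap (R j).subtype q, hq'p⟩ : PrimeSpectrum (R j)) :=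
      two_le_height (a := ⟨_, ha'p⟩) (b := ⟨_, hb'p⟩)
        ((PrimeSpectrum.asIdeal_lt_asIdeal _ _).mp l1)
        ((PrimeSpectrum.asIdeal_lt_asIdeal _ _).mp l2)
    have h1 := hsmall j hij
    rw [idealHt_eq_height hq'p] at h1
    exact absurd (h2.trans h1) (by norm_num)
  -- (ii) associated primes of T
  have hassS : ∀ q ∈ associatedPrimes T T, Ideal.comap S.subtype q = ⊥ := by
    intro q hqmem
    refine (Submodule.eq_bot_iff _).mpr fun x hx => ?_
    obtain ⟨i, hi⟩ := (hmemS (x : T)).mp x.2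
    have hx' : (⟨(x : T), hi⟩ : R i) ∈ Ideal.comap (R i).subtype q :=
      Ideal.mem_comap.mpr (show (x : T) ∈ q from Ideal.mem_comap.mp hx)
    rw [(hzd i).2.2.1 q hqmem] at hx'
    exact Subtype.ext (by have h9 := congrArg Subtype.val (Ideal.mem_bot.mp hx'); exact h9)
  -- (iii)
  have hhtS : ∀ t ∈ nonZeroDivisors T, ∀ q ∈ associatedPrimes T (T ⧸ Ideal.span {t}),
      idealHt (Ideal.comap S.subtype q) ≤ 1 := by
    intro t ht q hqmem
    have hqp : q.IsPrime := hqmem.isPrime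
    have hqS : (Ideal.comap S.subtype q).IsPrime := comap_isPrime _ _ hqp
    rw [idealHt_eq_height hqS]
    exact contract q hqp hqS (Classical.arbitrary ι)
      fun j _ => (hzd j).2.2.2.1 t ht q hqmem
  -- (iv) Q ⊆ specHt T d
  have hQdS : QS ⊆ specHt T d := by
    rw [hQS]
    exact Set.iUnion_subset fun i => (hzd i).2.2.2.2.1
  -- MapsTo
  have hmaps : ∀ q ∈ QS, Ideal.comap S.subtype q ∈ specHt (↥S) 1 := by
    intro q hqmem
    rw [hQS] at hqmem
    obtain ⟨i, hqi⟩ := Set.mem_iUnion.mp hqmem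
    have hq1 : Ideal.comap (R i).subtype q ∈ specHt (↥(R i)) 1 :=
      (hzd i).2.2.2.2.2.1 hqi
    have hqp : q.IsPrime := ((hzd i).2.2.2.2.1 hqi).1
    have hqS : (Ideal.comap S.subtype q).IsPrime := comap_isPrime _ _ hqp
    refine ⟨hqS, ?_⟩
    rw [idealHt_eq_height hqS]
    refine le_antisymm (contract q hqp hqS i
      fun j hij => le_of_eq ((hzd j).2.2.2.2.2.1 (hQmono hij hqi)).2) ?_
    obtain ⟨hdi, -⟩ := (hzd i).2.1
    haveI := hdi
    have hne : Ideal.comap (R i).subtype q ≠ ⊥ := by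
      intro hbot
      have h2 := hq1.2
      rw [hbot, idealHt_eq_height Ideal.bot_prime] at h2
      rw [show Order.height (⟨⊥, Ideal.bot_prime⟩ : PrimeSpectrum (R i)) = 0 from
        Order.height_eq_zero.mpr fun c hc =>
          (PrimeSpectrum.asIdeal_le_asIdeal _ _).mp bot_le] at h2
      norm_num at h2
    obtain ⟨x, hxq, hx0⟩ := (Submodule.ne_bot_iff _).mp hne
    have hSne : Ideal.comap S.subtype q ≠ ⊥ := by
      intro hbot
      have hmem : (⟨(x : T), hle i x.2⟩ : S) ∈ Ideal.comap S.subtype q :=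
        Ideal.mem_comap.mpr (show (x : T) ∈ q from Ideal.mem_comap.mp hxq)
      rw [hbot] at hmem
      exact hx0 (Subtype.ext (by
        have h9 := congrArg Subtype.val (Ideal.mem_bot.mp hmem); exact h9))
    refine one_le_height (a := ⟨⊥, Ideal.bot_prime⟩) ?_
    exact (PrimeSpectrum.asIdeal_lt_asIdeal _ _).mp (bot_lt_iff_ne_bot.mpr hSne)
  -- InjOn
  have hinj : Set.InjOn (fun q => Ideal.comap S.subtype q) QS := by
    intro q1 h1 q2 h2 heq
    rw [hQS] at h1 h2
    obtain ⟨i1, h1⟩ := Set.mem_iUnion.mp h1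
    obtain ⟨i2, h2⟩ := Set.mem_iUnion.mp h2
    have h1j : q1 ∈ Q (max i1 i2) := hQmono (le_max_left _ _) h1
    have h2j : q2 ∈ Q (max i1 i2) := hQmono (le_max_right _ _) h2
    refine (hzd (max i1 i2)).2.2.2.2.2.2.1 h1j h2j ?_
    show Ideal.comap (R (max i1 i2)).subtype q1 = Ideal.comap (R (max i1 i2)).subtype q2
    ext z
    simp only [Ideal.mem_comap]
    constructor
    · intro hz
      have : Subring.inclusion (hle (max i1 i2)) z ∈ Ideal.comap S.subtype q1 :=
        Ideal.mem_comap.mpr hz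
      rw [show Ideal.comap S.subtype q1 = Ideal.comap S.subtype q2 from heq] at this
      exact Ideal.mem_comap.mp this
    · intro hz
      have : Subring.inclusion (hle (max i1 i2)) z ∈ Ideal.comap S.subtype q2 :=
        Ideal.mem_comap.mpr hz
      rw [show Ideal.comap S.subtype q2 = Ideal.comap S.subtype q1 from heq.symm] at this
      exact Ideal.mem_comap.mp this
  -- SurjOn
  haveI := hufmS
  have hsurj : Set.SurjOn (fun q => Ideal.comap S.subtype q) QS (specHt (↥S) 1) := by
    rintro p ⟨hpp, hp1⟩
    rw [idealHt_eq_height hpp] at hp1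
    have hpne : p ≠ ⊥ := by
      rintro rfl
      rw [show Order.height (⟨⊥, hpp⟩ : PrimeSpectrum S) = 0 from
        Order.height_eq_zero.mpr fun c hc =>
          (PrimeSpectrum.asIdeal_le_asIdeal _ _).mp bot_le] at hp1
      norm_num at hp1
    obtain ⟨x, hxp, hx0⟩ := (Submodule.ne_bot_iff _).mp hpne
    obtain ⟨f, hfp, hfx⟩ := UniqueFactorizationMonoid.exists_prime_factors x hx0
    have hprod : f.prod ∈ p := by
      obtain ⟨u, hu⟩ := hfx
      have : f.prod = x * ↑u⁻¹ := by
        rw [← hu]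
        rw [mul_assoc]
        simp
      rw [this]
      exact Ideal.mul_mem_right _ _ hxp
    obtain ⟨s, hsf, hsp⟩ := (Ideal.IsPrime.multiset_prod_mem_iff_exists_mem hpp f).mp hprod
    have hsprime : Prime s := hfp s hsf
    have hspan : Ideal.span {s} = p := by
      have hle1 : Ideal.span {s} ≤ p := (Ideal.span_singleton_le_iff_mem _).mpr hsp
      by_contra hne
      have hlt : Ideal.span {s} < p := lt_of_le_of_ne hle1 hne
      have hbotlt : (⊥ : Ideal S) < Ideal.span {s} :=
        bot_lt_iff_ne_bot.mpr (by simp [Ideal.span_singleton_eq_bot, hsprime.ne_zero])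
      have hsp' : (Ideal.span {s} : Ideal S).IsPrime :=
        (Ideal.span_singleton_prime hsprime.ne_zero).mpr hsprime
      have h2 : (2 : ℕ∞) ≤ Order.height (⟨p, hpp⟩ : PrimeSpectrum S) :=
        two_le_height (a := ⟨⊥, Ideal.bot_prime⟩) (b := ⟨Ideal.span {s}, hsp'⟩)
          ((PrimeSpectrum.asIdeal_lt_asIdeal _ _).mp hbotlt)
          ((PrimeSpectrum.asIdeal_lt_asIdeal _ _).mp hlt)
      rw [hp1] at h2
      norm_num at h2
    obtain ⟨i, hsi⟩ := (hmemS (s : T)).mp s.2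
    obtain ⟨hdi, hui⟩ := (hzd i).2.1
    haveI := hdi
    haveI := hui
    have hs0 : (⟨(s : T), hsi⟩ : R i) ≠ 0 := fun h => hsprime.ne_zero
      (Subtype.ext (by have h9 := congrArg Subtype.val h; exact h9))
    obtain ⟨g, hgp, hga⟩ :=
      UniqueFactorizationMonoid.exists_prime_factors (⟨(s : T), hsi⟩ : R i) hs0
    set φ : (R i) →+* S := Subring.inclusion (hle i) with hφ
    have hφs : φ ⟨(s : T), hsi⟩ = s := Subtype.ext rfl
    have hφprime : ∀ z : R i, Prime z → Prime (φ z) := by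
      intro z hz
      have h := hprimeS i z hz
      exact (show (⟨(z : T), hle i z.2⟩ : S) = φ z from Subtype.ext rfl) ▸ h
    have hcard : ∃ p1, g = {p1} := by
      rcases Multiset.empty_or_exists_mem g with hg0 | ⟨p1, hp1mem⟩
      · exfalso
        rw [hg0] at hga
        simp only [Multiset.prod_zero] at hga
        have : IsUnit (⟨(s : T), hsi⟩ : R i) := (associated_one_iff_isUnit.mp hga.symm)
        exact hsprime.not_unit (hφs ▸ this.map φ)
      obtain ⟨g', rfl⟩ := Multiset.exists_cons_of_mem hp1mem
      rcases Multiset.empty_or_exists_mem g' with hg0 | ⟨p2, hp2mem⟩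
      · exact ⟨p1, by simp [hg0]⟩
      exfalso
      obtain ⟨g'', rfl⟩ := Multiset.exists_cons_of_mem hp2mem
      have h1 : Associated (φ p1 * (φ p2 * φ g''.prod)) s := by
        have h := hga.map φ
        rw [hφs] at h
        rw [Multiset.prod_cons, Multiset.prod_cons, map_mul, map_mul] at h
        exact h
      obtain ⟨u, hu⟩ := h1
      have hs_eq : s = φ p1 * (φ p2 * φ g''.prod * ↑u) := by
        rw [← hu]; ring
      rcases hsprime.irreducible.isUnit_or_isUnit hs_eq with h | h
      · exact (hφprime p1 (hgp p1 (Multiset.mem_cons_self _ _))).not_unit h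
      · have : IsUnit (φ p2) := isUnit_of_mul_isUnit_left (isUnit_of_mul_isUnit_left h)
        exact (hφprime p2 (hgp p2 (Multiset.mem_cons_of_mem (Multiset.mem_cons_self _ _)))).not_unit this
    obtain ⟨p1, rfl⟩ := hcard
    have hassoc : Associated p1 (⟨(s : T), hsi⟩ : R i) := by
      simpa using hga
    have hp1prime : Prime p1 := hgp p1 (Multiset.mem_singleton_self _)
    have hP1p : (Ideal.span {p1} : Ideal (R i)).IsPrime :=
      (Ideal.span_singleton_prime hp1prime.ne_zero).mpr hp1prime
    have hP1ht : idealHt (Ideal.span {p1} : Ideal (R i)) = 1 := by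
      rw [idealHt_eq_height hP1p]
      refine le_antisymm (height_le_one_of ?_) (one_le_height (a := ⟨⊥, Ideal.bot_prime⟩) ?_)
      · intro a b hab hbs
        have hb : b.asIdeal = ⊥ := eq_bot_of_lt_span_prime hp1prime b.2
          ((PrimeSpectrum.asIdeal_lt_asIdeal b _).mpr hbs)
        have : a.asIdeal < (⊥ : Ideal (R i)) :=
          hb ▸ (PrimeSpectrum.asIdeal_lt_asIdeal a b).mpr hab
        exact not_lt_bot this
      · refine (PrimeSpectrum.asIdeal_lt_asIdeal _ _).mp (bot_lt_iff_ne_bot.mpr ?_)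
        simp [Ideal.span_singleton_eq_bot, hp1prime.ne_zero]
    obtain ⟨q, hqQ, hqe⟩ := (hzd i).2.2.2.2.2.2.2 ⟨hP1p, hP1ht⟩
    have hqQS : q ∈ QS := by rw [hQS]; exact Set.mem_iUnion.mpr ⟨i, hqQ⟩
    refine ⟨q, hqQS, ?_⟩
    have hq_spec : Ideal.comap S.subtype q ∈ specHt (↥S) 1 := hmaps q hqQS
    have hqe' : Ideal.comap (R i).subtype q = Ideal.span {p1} := hqe
    have hp1q : (p1 : T) ∈ q := by
      have : p1 ∈ Ideal.comap (R i).subtype q := by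
        rw [hqe']; exact Ideal.subset_span rfl
      exact Ideal.mem_comap.mp this
    have hsq : s ∈ Ideal.comap S.subtype q := by
      obtain ⟨v, hv⟩ := hassoc
      have heq2 : φ p1 * φ ↑v = s := by
        rw [← map_mul, hv]
        exact hφs
      rw [← heq2]
      exact Ideal.mul_mem_right _ _ (Ideal.mem_comap.mpr (show ((φ p1 : S) : T) ∈ q from hp1q))
    have hple : p ≤ Ideal.comap S.subtype q := by
      rw [← hspan]
      exact (Ideal.span_singleton_le_iff_mem _).mpr hsq
    rcases eq_or_lt_of_le hple with h | h
    · exact h.symm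
    exfalso
    have h2 : (2 : ℕ∞) ≤ Order.height
        (⟨Ideal.comap S.subtype q, hq_spec.1⟩ : PrimeSpectrum S) :=
      two_le_height (a := ⟨⊥, Ideal.bot_prime⟩) (b := ⟨p, hpp⟩)
        ((PrimeSpectrum.asIdeal_lt_asIdeal _ _).mp (bot_lt_iff_ne_bot.mpr hpne))
        ((PrimeSpectrum.asIdeal_lt_asIdeal _ _).mp h)
    have h3 := hq_spec.2
    rw [idealHt_eq_height hq_spec.1] at h3
    rw [h3] at h2
    norm_num at h2
  refine ⟨⟨hqlS, ⟨hdomS, hufmS⟩, hassS, hhtS, hQdS, fun q hq => hmaps q hq, hinj, hsurj⟩, ?_⟩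
  intro i x hx hle'
  have h := hprimeS i x hx
  exact (show (⟨(x : T), hle i x.2⟩ : S) = Subring.inclusion hle' x from Subtype.ext rfl) ▸ h

end UnionLemma

lemma card_union_le {T : Type u} [CommRing T] {ι : Type u} [Nonempty ι] (R : ι → Subring T)
    (S : Subring T) (hS : (S : Set T) = ⋃ i, (R i : Set T)) (κ : Cardinal.{u})
    (hκ : ℵ₀ ≤ κ) (hι : #ι ≤ κ) (hR : ∀ i, #(R i) ≤ κ) : #S ≤ κ := by
  have e1 : #S = #(⋃ i, (R i : Set T)) := by
    have e0 : #S = #((S : Set T)) := rfl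
    rw [e0, hS]
  rw [e1]
  refine le_trans (Cardinal.mk_iUnion_le _) (le_trans
    (mul_le_mul' hι (ciSup_le' fun i => le_trans (le_of_eq rfl) (hR i)))
    (le_of_eq (Cardinal.mul_eq_self hκ)))

set_option maxHeartbeats 2000000 in
theorem zd_union {T : Type u} [CommRing T] [IsLocalRing T] [IsNoetherianRing T]
    [IsAdicComplete (maximalIdeal T) T] (d : ℕ)
    (Ω : Type u) [LinearOrder Ω] [WellFoundedLT Ω] [OrderBot Ω]
    (hΩ : Countable Ω ∨ ∀ β : Ω, #{γ : Ω // γ < β} < #(ResidueField T))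
    (R : Ω → Subring T) (Q : Ω → Set (Ideal T))
    (hR0 : IsZdSubring d (R ⊥) (Q ⊥))
    (P : Ideal T) (hP : P.IsPrime) (hPmax : ¬ P.IsMaximal)
    (hPR0 : Ideal.comap (R ⊥).subtype P = ⊥)
    (hasc : Monotone R)
    (hP' : ∀ α : Ω, Ideal.comap (R α).subtype P = ⊥)
    (hlim : ∀ β : Ω, IsLimitElem β →
      ((R β : Set T) = ⋃ γ ∈ Set.Iio β, ((R γ : Set T))) ∧
      Q β = ⋃ γ ∈ Set.Iio β, Q γ)
    (hsucc : ∀ β γ : Ω, IsSuccOf β γ → IsAPlusExtension d (R γ) (R β) (Q γ) (Q β))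
    (S : Subring T) (hS : (S : Set T) = ⋃ β : Ω, ((R β : Set T)))
    (QS : Set (Ideal T)) (hQS : QS = ⋃ β : Ω, Q β) :
    ZdConditions d S QS ∧
    #S ≤ max (max ℵ₀ #(R ⊥)) #Ω ∧
    Ideal.comap S.subtype P = ⊥ ∧
    (∀ (β : Ω) (x : R β), Prime x → ∀ hle : R β ≤ S, Prime (Subring.inclusion hle x)) ∧
    Q ⊥ ⊆ QS := by
  classical
  haveI : Nonempty Ω := ⟨⊥⟩
  set κ := max (max ℵ₀ #(R ⊥)) #Ω with hκdef
  have hℵκ : ℵ₀ ≤ κ := le_trans (le_max_left _ _) (le_max_left _ _)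
  have main : ∀ β : Ω, ZdConditions d (R β) (Q β) ∧ #(R β) ≤ κ ∧
      (∀ γ, γ ≤ β → Q γ ⊆ Q β) ∧
      ∀ γ (h : γ ≤ β), ∀ x : R γ, Prime x → Prime (Subring.inclusion (hasc h) x) := by
    intro β₀
    induction β₀ using WellFoundedLT.induction with
    | ind β ih =>
    by_cases hb : β = ⊥
    · subst hb
      refine ⟨hR0.1, le_trans (le_max_right ℵ₀ _) (le_max_left _ _), ?_, ?_⟩
      · intro γ hγ
        rw [le_bot_iff.mp hγ]
      · intro γ hγ x hx
        have hγ' : γ = ⊥ := le_bot_iff.mp hγ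
        subst hγ'
        exact (show x = Subring.inclusion (hasc hγ) x from Subtype.ext rfl) ▸ hx
    by_cases hs : ∃ γ, IsSuccOf β γ
    · obtain ⟨γ, hsg⟩ := hs
      obtain ⟨-, hzdβ, hleE, hprimeE, hcardE, hQE⟩ := hsucc β γ hsg
      have ihγ := ih γ hsg.1
      have hlt : ∀ γ', γ' < β → γ' ≤ γ := by
        intro γ' h
        by_contra hcon
        push_neg at hcon
        exact absurd (hsg.2 γ' hcon) (not_le_of_gt h)
      refine ⟨hzdβ.1, hcardE.trans (max_le hℵκ ihγ.2.1), ?_, ?_⟩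
      · intro γ' h
        rcases eq_or_lt_of_le h with rfl | h'
        · exact subset_rfl
        · exact (ihγ.2.2.1 γ' (hlt γ' h')).trans hQE
      · intro γ' h x hx
        rcases eq_or_lt_of_le h with rfl | h'
        · exact (show x = Subring.inclusion (hasc h) x from Subtype.ext rfl) ▸ hx
        · have h1 := ihγ.2.2.2 γ' (hlt γ' h') x hx
          have h2 := hprimeE _ h1
          exact (show Subring.inclusion hleE (Subring.inclusion (hasc (hlt γ' h')) x)
            = Subring.inclusion (hasc h) x from Subtype.ext rfl) ▸ h2
    · have hlimβ : IsLimitElem β := ⟨hb, hs⟩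
      obtain ⟨hSeq, hQeq⟩ := hlim β hlimβ
      haveI : Nonempty ↥(Set.Iio β) := ⟨⟨⊥, bot_lt_iff_ne_bot.mpr hb⟩⟩
      have hmono' : Monotone (fun γ : ↥(Set.Iio β) => R γ.1) := fun a b h => hasc h
      have hQmono' : Monotone (fun γ : ↥(Set.Iio β) => Q γ.1) := by
        intro a b h
        exact (ih b.1 b.2).2.2.1 a.1 h
      have hzd' : ∀ γ : ↥(Set.Iio β), ZdConditions d (R γ.1) (Q γ.1) :=
        fun γ => (ih γ.1 γ.2).1
      have hprime' : ∀ (a b : ↥(Set.Iio β)) (h : a ≤ b), ∀ x : R a.1, Prime x →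
          Prime (Subring.inclusion (hmono' h) x) := by
        intro a b h x hx
        exact (ih b.1 b.2).2.2.2 a.1 h x hx
      have hS' : ((R β : Set T)) = ⋃ γ : ↥(Set.Iio β), ((R γ.1 : Set T)) := by
        rw [hSeq, Set.biUnion_eq_iUnion]
      have hQ' : Q β = ⋃ γ : ↥(Set.Iio β), Q γ.1 := by
        rw [hQeq, Set.biUnion_eq_iUnion]
      obtain ⟨hzdβ, hprimesβ⟩ :=
        zd_union_lemma d hmono' hQmono' hzd' hprime' (R β) hS' (Q β) hQ'
      refine ⟨hzdβ, ?_, ?_, ?_⟩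
      · refine card_union_le _ (R β) hS' κ hℵκ ?_ fun γ => (ih γ.1 γ.2).2.1
        exact le_trans (Cardinal.mk_set_le _) (le_max_right _ _)
      · intro γ hγ
        rcases eq_or_lt_of_le hγ with rfl | h'
        · exact subset_rfl
        · rw [hQeq]
          exact Set.subset_biUnion_of_mem h'
      · intro γ h x hx
        rcases eq_or_lt_of_le h with rfl | h'
        · exact (show x = Subring.inclusion (hasc h) x from Subtype.ext rfl) ▸ hx
        · exact hprimesβ ⟨γ, h'⟩ x hx (hasc h)
  have hQmonoΩ : Monotone Q := fun a b h => (main b).2.2.1 a h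
  have hprimeΩ : ∀ (a b : Ω) (h : a ≤ b), ∀ x : R a, Prime x →
      Prime (Subring.inclusion (hasc h) x) := fun a b h x hx => (main b).2.2.2 a h x hx
  obtain ⟨hzdS, hprimesS⟩ :=
    zd_union_lemma d hasc hQmonoΩ (fun β => (main β).1) hprimeΩ S hS QS hQS
  refine ⟨hzdS, ?_, ?_, fun β x hx hle => hprimesS β x hx hle,
    by rw [hQS]; exact Set.subset_iUnion Q ⊥⟩
  · exact card_union_le _ S hS _ hℵκ (le_max_right _ _) fun β => (main β).2.1
  · refine (Submodule.eq_bot_iff _).mpr fun x hx => ?_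
    have hxS : (x : T) ∈ ⋃ β, ((R β : Set T)) := by rw [← hS]; exact x.2
    obtain ⟨i, hi⟩ := Set.mem_iUnion.mp hxS
    have hx' : (⟨(x : T), hi⟩ : R i) ∈ Ideal.comap (R i).subtype P :=
      Ideal.mem_comap.mpr (show (x : T) ∈ P from Ideal.mem_comap.mp hx)
    rw [hP' i] at hx'
    exact Subtype.ext (by have h9 := congrArg Subtype.val (Ideal.mem_bot.mp hx'); exact h9)
end

section
/- Let T be a commutative ring with a subring R, let y ∈ T, and let p be a prime ideal of T such that the image of y in T/p is transcendental over the image of R in T/(p ∩ R) (viewed inside T/p). Then p ∩ R[y] = (p ∩ R)·R[y], where R[y] is the subring of T generated by R and y. -/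
lemma exists_poly_rep {T : Type*} [CommRing T] (R : Subring T) (y : T) {x : T}
    (hx : x ∈ Subring.closure ((R : Set T) ∪ {y})) :
    ∃ f : Polynomial R, Polynomial.eval₂ R.subtype y f = x := by
  induction hx using Subring.closure_induction with
  | mem s hs =>
    rcases hs with h | h
    · exact ⟨Polynomial.C ⟨s, h⟩, by simp⟩
    · exact ⟨Polynomial.X, by simp [Set.mem_singleton_iff.mp h]⟩
  | zero => exact ⟨0, by simp⟩
  | one => exact ⟨1, by simp⟩
  | add a b _ _ ha hb =>
    obtain ⟨f, hf⟩ := ha; obtain ⟨g, hg⟩ := hb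
    exact ⟨f + g, by simp [hf, hg]⟩
  | neg a _ ha =>
    obtain ⟨f, hf⟩ := ha
    exact ⟨-f, by simp [hf]⟩
  | mul a b _ _ ha hb =>
    obtain ⟨f, hf⟩ := ha; obtain ⟨g, hg⟩ := hb
    exact ⟨f * g, by simp [hf, hg]⟩

/-- Let `T` be a commutative ring with subring `R`, let `y ∈ T`, and let `p` be a prime
ideal of `T` such that the image of `y` in `T/p` is transcendental over the image of `R`
(that is, any polynomial over `R` annihilating `y + p` has all of its coefficients in
`p`). Then `p ∩ R[y] = (p ∩ R)·R[y]`, where `R[y]` is the subring of `T` generated by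
`R` and `y`. -/
theorem comap_adjoin_eq_map_comap {T : Type*} [CommRing T] (R : Subring T) (y : T)
    (p : Ideal T) (hp : p.IsPrime)
    (htrans : ∀ f : Polynomial R,
      Polynomial.aeval (Ideal.Quotient.mk p y) f = 0 → ∀ n : ℕ, ((f.coeff n : T) ∈ p)) :
    ∀ hle : R ≤ Subring.closure ((R : Set T) ∪ {y}),
      Ideal.comap (Subring.closure ((R : Set T) ∪ {y})).subtype p =
        Ideal.map (Subring.inclusion hle) (Ideal.comap R.subtype p) := by
  intro hle
  set S := Subring.closure ((R : Set T) ∪ {y}) with hS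
  apply le_antisymm
  · intro x hx
    have hx' : (x : T) ∈ p := hx
    obtain ⟨f, hf⟩ := exists_poly_rep R y x.2
    have haeval : Polynomial.aeval (Ideal.Quotient.mk p y) f = 0 := by
      have : Polynomial.aeval (Ideal.Quotient.mk p y) f
          = Ideal.Quotient.mk p (Polynomial.eval₂ R.subtype y f) := by
        rw [Polynomial.aeval_def, Polynomial.hom_eval₂]
        rfl
      rw [this, hf]
      exact (Ideal.Quotient.eq_zero_iff_mem).mpr hx'
    have hcoeff := htrans f haeval
    have yS : S := ⟨y, Subring.subset_closure (Or.inr rfl)⟩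
    have hxeq : x = ∑ i ∈ f.support,
        (Subring.inclusion hle (f.coeff i)) * (⟨y, Subring.subset_closure (Or.inr rfl)⟩ : S) ^ i := by
      apply Subtype.ext
      push_cast
      rw [← hf, Polynomial.eval₂_eq_sum, Polynomial.sum]
      rfl
    rw [hxeq]
    refine Ideal.sum_mem _ fun i _ => Ideal.mul_mem_right _ _ ?_
    exact Ideal.mem_map_of_mem _ (hcoeff i)
  · rw [Ideal.map_le_iff_le_comap]
    intro r hr
    exact hr
end
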